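/- arXiv:2502.14852 — 7 statements merged into one kernel-verified Lean document; each statement's English description precedes it below -/
import Mathlib

section
/- Let D be an additive category equipped with a shift functor indexed by the integers, and let S : D ≌ D be an additive auto-equivalence commuting with the shift. Let X and Y be objects and m, n, p, q integers such that S^n(X) ≅ X[m] and S^q(Y) ≅ Y[p], and assume Δ := np − mq ≠ 0. Assume moreover that either there exists i₀ ∈ ℤ with Hom(X, Y[i]) = 0 for all i ≤ i₀, or there exists i₀ ∈ ℤ with Hom(X, Y[i]) = 0 for all i ≥ i₀. Then Hom(X, Y[i]) = 0 for every integer i; in particular Hom(X, Y) = 0. -/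
open CategoryTheory

/-- Iterated composition of an endofunctor: `iterFun F n = F ∘ F ∘ ⋯ ∘ F` (`n` times). -/
def iterFun {D : Type*} [Category D] (F : D ⥤ D) : ℕ → (D ⥤ D)
  | 0 => Functor.id D
  | n + 1 => iterFun F n ⋙ F

/-- The `k`-th power (`k : ℤ`) of an auto-equivalence `S : D ≌ D`, as an endofunctor:
for `k ≥ 0` it is the `k`-fold composite of `S.functor`, for `k < 0` the `(-k)`-fold
composite of the quasi-inverse `S.inverse`. -/
def zpowFun {D : Type*} [Category D] (S : D ≌ D) : ℤ → (D ⥤ D)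
  | Int.ofNat k => iterFun S.functor k
  | Int.negSucc k => iterFun S.inverse (k + 1)

namespace CYAux

variable {D : Type*} [Category D]

theorem iterFun_isEquiv (F : D ⥤ D) [F.IsEquivalence] : ∀ k, (iterFun F k).IsEquivalence
  | 0 => inferInstanceAs (Functor.id D).IsEquivalence
  | k + 1 => by
      have := iterFun_isEquiv F k
      exact inferInstanceAs ((iterFun F k ⋙ F)).IsEquivalence

theorem zpow_isEquiv (S : D ≌ D) : ∀ a : ℤ, (zpowFun S a).IsEquivalence
  | Int.ofNat k => iterFun_isEquiv S.functor k
  | Int.negSucc k => iterFun_isEquiv S.inverse (k + 1)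

def zpowCongrObj (S : D ≌ D) {a b : ℤ} (h : a = b) (Z : D) :
    (zpowFun S a).obj Z ≅ (zpowFun S b).obj Z :=
  eqToIso (by rw [h])

variable [HasShift D ℤ]

/-- Objectwise shift-commutation for the inverse of the equivalence. -/
def invShiftIso (S : D ≌ D) [S.functor.CommShift ℤ] (Z : D) (s : ℤ) :
    S.inverse.obj (Z⟦s⟧) ≅ (S.inverse.obj Z)⟦s⟧ :=
  S.inverse.mapIso ((shiftFunctor D s).mapIso (S.counitIso.app Z).symm ≪≫
    ((S.functor.commShiftIso s).app (S.inverse.obj Z)).symm) ≪≫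
  (S.unitIso.app ((S.inverse.obj Z)⟦s⟧)).symm

def iterShiftIso (F : D ⥤ D) (c : ∀ (Z : D) (s : ℤ), F.obj (Z⟦s⟧) ≅ (F.obj Z)⟦s⟧) :
    ∀ (k : ℕ) (Z : D) (s : ℤ), (iterFun F k).obj (Z⟦s⟧) ≅ ((iterFun F k).obj Z)⟦s⟧
  | 0, _, _ => Iso.refl _
  | k + 1, Z, s => F.mapIso (iterShiftIso F c k Z s) ≪≫ c _ s

def zpowShiftIso (S : D ≌ D) [S.functor.CommShift ℤ] :
    ∀ (a : ℤ) (Z : D) (s : ℤ), (zpowFun S a).obj (Z⟦s⟧) ≅ ((zpowFun S a).obj Z)⟦s⟧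
  | Int.ofNat k => iterShiftIso S.functor (fun Z s => (S.functor.commShiftIso s).app Z) k
  | Int.negSucc k => iterShiftIso S.inverse (invShiftIso S) (k + 1)

def zpowSuccObj (S : D ≌ D) : ∀ (a : ℤ) (Z : D),
    (zpowFun S (a + 1)).obj Z ≅ S.functor.obj ((zpowFun S a).obj Z)
  | Int.ofNat k, Z => Iso.refl _
  | Int.negSucc 0, Z => (S.counitIso.app Z).symm
  | Int.negSucc (k + 1), Z => (S.counitIso.app ((iterFun S.inverse (k + 1)).obj Z)).symm

def zpowPredObj (S : D ≌ D) : ∀ (a : ℤ) (Z : D),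
    (zpowFun S (a - 1)).obj Z ≅ S.inverse.obj ((zpowFun S a).obj Z)
  | Int.ofNat 0, Z => Iso.refl _
  | Int.ofNat (k + 1), Z =>
      zpowCongrObj S (show (Int.ofNat (k + 1) : ℤ) - 1 = Int.ofNat k by simp [Int.ofNat_eq_natCast]) Z ≪≫
        S.unitIso.app ((iterFun S.functor k).obj Z)
  | Int.negSucc k, Z => Iso.refl _

theorem zpow_comp_obj (S : D ≌ D) (a : ℤ) (Z : D) (b : ℤ) :
    Nonempty ((zpowFun S (a + b)).obj Z ≅ (zpowFun S b).obj ((zpowFun S a).obj Z)) := by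
  induction b using Int.induction_on with
  | zero => exact ⟨zpowCongrObj S (by omega : a + 0 = (0 : ℤ) + a) Z ≪≫
      zpowCongrObj S (by omega : (0 : ℤ) + a = a) Z⟩
  | succ b ih =>
      obtain ⟨e⟩ := ih
      exact ⟨zpowCongrObj S (by omega : a + (b + 1) = (a + b) + 1) Z ≪≫
        zpowSuccObj S (a + b) Z ≪≫ S.functor.mapIso e ≪≫
        (zpowSuccObj S b ((zpowFun S a).obj Z)).symm⟩
  | pred b ih =>
      obtain ⟨e⟩ := ih
      exact ⟨zpowCongrObj S (by omega : a + (-b - 1) = (a + -b) - 1) Z ≪≫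
        zpowPredObj S (a + -b) Z ≪≫ S.inverse.mapIso e ≪≫
        (zpowPredObj S (-b) ((zpowFun S a).obj Z)).symm⟩

variable (S : D ≌ D) [S.functor.CommShift ℤ]

theorem zpow_add_obj {a b c d : ℤ} {X : D}
    (ha : (zpowFun S a).obj X ≅ X⟦c⟧) (hb : (zpowFun S b).obj X ≅ X⟦d⟧) :
    Nonempty ((zpowFun S (a + b)).obj X ≅ X⟦c + d⟧) := by
  obtain ⟨e⟩ := zpow_comp_obj S a X b
  exact ⟨e ≪≫ (zpowFun S b).mapIso ha ≪≫ zpowShiftIso S b X c ≪≫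
    (shiftFunctor D c).mapIso hb ≪≫ (shiftAdd X d c).symm ≪≫
    eqToIso (by rw [add_comm d c])⟩

theorem zpow_neg_obj {a c : ℤ} {X : D} (ha : (zpowFun S a).obj X ≅ X⟦c⟧) :
    Nonempty ((zpowFun S (-a)).obj X ≅ X⟦-c⟧) := by
  obtain ⟨e⟩ := zpow_comp_obj S a X (-a)
  have e1 : X ≅ ((zpowFun S (-a)).obj X)⟦c⟧ :=
    zpowCongrObj S (by omega : (0 : ℤ) = a + -a) X ≪≫ e ≪≫
      (zpowFun S (-a)).mapIso ha ≪≫ zpowShiftIso S (-a) X c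
  exact ⟨((shiftFunctorCompIsoId D c (-c) (by omega)).app ((zpowFun S (-a)).obj X)).symm ≪≫
    (shiftFunctor D (-c)).mapIso e1.symm⟩

theorem zpow_mul_obj {a c : ℤ} {X : D} (ha : (zpowFun S a).obj X ≅ X⟦c⟧) (t : ℤ) :
    Nonempty ((zpowFun S (a * t)).obj X ≅ X⟦c * t⟧) := by
  induction t using Int.induction_on with
  | zero => exact ⟨zpowCongrObj S (show a * 0 = (0 : ℤ) by ring) X ≪≫
      ((shiftFunctorZero D ℤ).app X).symm ≪≫ eqToIso (by rw [mul_zero])⟩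
  | succ k ih =>
      obtain ⟨e⟩ := ih
      obtain ⟨e'⟩ := zpow_add_obj S e ha
      exact ⟨zpowCongrObj S (show a * ((k : ℤ) + 1) = a * k + a by ring) X ≪≫ e' ≪≫
        eqToIso (by rw [show c * k + c = c * ((k : ℤ) + 1) by ring])⟩
  | pred k ih =>
      obtain ⟨e⟩ := ih
      obtain ⟨na⟩ := zpow_neg_obj S ha
      obtain ⟨e'⟩ := zpow_add_obj S e na
      exact ⟨zpowCongrObj S (show a * (-(k : ℤ) - 1) = a * (-k) + -a by ring) X ≪≫ e' ≪≫
        eqToIso (by rw [show c * (-(k : ℤ)) + -c = c * (-k - 1) by ring])⟩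

end CYAux

/-- let `D` be an additive category with a shift indexed by `ℤ` and
`S : D ≌ D` an additive auto-equivalence commuting with the shift. If `Sⁿ(X) ≅ X[m]`,
`S^q(Y) ≅ Y[p]`, `Δ = np − mq ≠ 0`, and `Hom(X, Y[i])` vanishes for all `i ≤ i₀` or
for all `i ≥ i₀` (some `i₀`), then `Hom(X, Y[i]) = 0` for every `i ∈ ℤ`; in particular
`Hom(X, Y) = 0`. -/
theorem stmt1 {D : Type*} [Category D] [Preadditive D] [HasShift D ℤ]
    (S : D ≌ D) [S.functor.Additive] [S.functor.CommShift ℤ]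
    (X Y : D) (m n p q : ℤ)
    (hX : Nonempty ((zpowFun S n).obj X ≅ X⟦m⟧))
    (hY : Nonempty ((zpowFun S q).obj Y ≅ Y⟦p⟧))
    (hΔ : n * p - m * q ≠ 0)
    (hvan : (∃ i₀ : ℤ, ∀ i ≤ i₀, ∀ f : X ⟶ Y⟦i⟧, f = 0) ∨
      (∃ i₀ : ℤ, ∀ i ≥ i₀, ∀ f : X ⟶ Y⟦i⟧, f = 0)) :
    (∀ i : ℤ, ∀ f : X ⟶ Y⟦i⟧, f = 0) ∧ ∀ f : X ⟶ Y, f = 0 := by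
  obtain ⟨eX0⟩ := hX
  obtain ⟨eY0⟩ := hY
  set Δ : ℤ := n * p - m * q with hΔdef
  obtain ⟨eX⟩ := CYAux.zpow_mul_obj S eX0 q
  obtain ⟨eY1⟩ := CYAux.zpow_mul_obj S eY0 n
  have eY : (zpowFun S (n * q)).obj Y ≅ Y⟦p * n⟧ :=
    CYAux.zpowCongrObj S (mul_comm n q) Y ≪≫ eY1
  haveI : (zpowFun S (n * q)).IsEquivalence := CYAux.zpow_isEquiv S (n * q)
  have per : ∀ i : ℤ, (X ⟶ Y⟦i⟧) ≃ (X ⟶ Y⟦i + Δ⟧) := by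
    intro i
    have ffG : (zpowFun S (n * q)).FullyFaithful := Functor.FullyFaithful.ofFullyFaithful _
    have ffT : (shiftFunctor D (m * q)).FullyFaithful := Functor.FullyFaithful.ofFullyFaithful _
    refine ffG.homEquiv.trans ((Iso.homCongr eX
      (CYAux.zpowShiftIso S (n * q) Y i ≪≫ (shiftFunctor D i).mapIso eY ≪≫
        (shiftAdd Y (p * n) i).symm ≪≫
        eqToIso (by rw [show p * n + i = (i + Δ) + m * q by rw [hΔdef]; ring]) ≪≫
        shiftAdd Y (i + Δ) (m * q))).trans ffT.homEquiv.symm)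
  have hQiff : ∀ i : ℤ, (∀ f : X ⟶ Y⟦i⟧, f = 0) ↔ Subsingleton (X ⟶ Y⟦i⟧) := fun i =>
    ⟨fun h => ⟨fun a b => (h a).trans (h b).symm⟩, fun h f => @Subsingleton.elim _ h f 0⟩
  have key : ∀ i : ℤ, Subsingleton (X ⟶ Y⟦i⟧) ↔ Subsingleton (X ⟶ Y⟦i + Δ⟧) := fun i =>
    (per i).subsingleton_congr
  have iter : ∀ (k : ℕ) (i : ℤ),
      Subsingleton (X ⟶ Y⟦i⟧) ↔ Subsingleton (X ⟶ Y⟦i + k * Δ⟧) := by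
    intro k
    induction k with
    | zero => intro i; rw [show i + ((0 : ℕ) : ℤ) * Δ = i by push_cast; ring]
    | succ k ih =>
        intro i
        have := (ih i).trans (key (i + k * Δ))
        rwa [show i + (k : ℤ) * Δ + Δ = i + ((k + 1 : ℕ) : ℤ) * Δ by push_cast; ring] at this
  have trans3 : ∀ i j : ℤ, (∃ t : ℤ, j - i = t * Δ) →
      (Subsingleton (X ⟶ Y⟦i⟧) ↔ Subsingleton (X ⟶ Y⟦j⟧)) := by
    rintro i j ⟨t, ht⟩
    rcases le_or_gt 0 t with h | h
    · have := iter t.toNat i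
      rwa [show i + (t.toNat : ℤ) * Δ = j by rw [Int.toNat_of_nonneg h]; linarith] at this
    · have := iter (-t).toNat j
      rw [show j + ((-t).toNat : ℤ) * Δ = i by
        rw [Int.toNat_of_nonneg (by omega : (0:ℤ) ≤ -t)]; linarith] at this
      exact this.symm
  have hΔΔ : 1 ≤ Δ * Δ := by rcases lt_or_gt_of_ne hΔ with h | h <;> nlinarith
  have main : ∀ i : ℤ, Subsingleton (X ⟶ Y⟦i⟧) := by
    intro i
    rcases hvan with ⟨i₀, h⟩ | ⟨i₀, h⟩
    · set k : ℕ := (i - i₀).toNat with hk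
      have hk0 : (0 : ℤ) ≤ (k : ℤ) := by positivity
      have hk1 : i - i₀ ≤ (k : ℤ) := Int.self_le_toNat _
      have hj : i - (k : ℤ) * (Δ * Δ) ≤ i₀ := by nlinarith
      have hQj := (hQiff _).mp (h _ hj)
      exact (trans3 _ i ⟨(k : ℤ) * Δ, by ring⟩).mp hQj
    · set k : ℕ := (i₀ - i).toNat with hk
      have hk0 : (0 : ℤ) ≤ (k : ℤ) := by positivity
      have hk1 : i₀ - i ≤ (k : ℤ) := Int.self_le_toNat _
      have hj : i + (k : ℤ) * (Δ * Δ) ≥ i₀ := by nlinarith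
      have hQj := (hQiff _).mp (h _ hj)
      exact (trans3 i _ ⟨(k : ℤ) * Δ, by ring⟩).mpr hQj
  refine ⟨fun i f => (hQiff i).mpr (main i) f, fun f => ?_⟩
  have h0 := (hQiff 0).mpr (main 0) (f ≫ ((shiftFunctorZero D ℤ).app Y).inv)
  have hf : f = (f ≫ ((shiftFunctorZero D ℤ).app Y).inv) ≫ ((shiftFunctorZero D ℤ).app Y).hom := by
    simp
  rw [hf, h0, Limits.zero_comp]
end

section
/- Let (Q,I) be a gentle quiver such that every vertex of Q is the source or the target of at least one arrow. Then the following three conditions are equivalent: (1) every vertex of Q is a transition vertex or a crossing vertex; (2) the quiver (Q,I) has no permitted threads; (3) every arrow of Q is contained in a permitted cycle. -/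
/-- A gentle quiver `(Q, I)`: a finite quiver with arrow set `A`, vertex set `V`,
source and target maps `s, t`, and a set `I` of composable pairs of arrows
(`rel β α` means `βα ∈ I`, which requires `s β = t α`), subject to the gentleness
conditions: every vertex has at most two incoming and at most two outgoing arrows,
and for every arrow there is at most one continuation (resp. precursor) with and
without relation. -/
structure GentleQuiver where
  /-- vertices -/
  V : Type
  /-- arrows -/
  A : Type
  fintypeV : Fintype V
  fintypeA : Fintype A
  /-- source of an arrow -/
  s : A → V
  /-- target of an arrow -/
  t : A → V
  /-- `rel β α` means that the composition `βα` lies in the ideal `I`. -/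
  rel : A → A → Prop
  rel_comp : ∀ β α, rel β α → s β = t α
  at_most_two_in : ∀ (v : V) (α β γ : A), t α = v → t β = v → t γ = v → α = β ∨ α = γ ∨ β = γ
  at_most_two_out : ∀ (v : V) (α β γ : A), s α = v → s β = v → s γ = v → α = β ∨ α = γ ∨ β = γ
  succ_nonrel_unique : ∀ α β β', s β = t α → s β' = t α → ¬ rel β α → ¬ rel β' α → β = β'
  succ_rel_unique : ∀ α β β', s β = t α → s β' = t α → rel β α → rel β' α → β = β'
  pred_nonrel_unique : ∀ α γ γ', t γ = s α → t γ' = s α → ¬ rel α γ → ¬ rel α γ' → γ = γ'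
  pred_rel_unique : ∀ α γ γ', t γ = s α → t γ' = s α → rel α γ → rel α γ' → γ = γ'

attribute [instance] GentleQuiver.fintypeV GentleQuiver.fintypeA

namespace GentleQuiver

variable (G : GentleQuiver)

/-- `b` may follow `a` in a permitted path: `s b = t a` and `ba ∉ I`. -/
def PStep (a b : G.A) : Prop := G.s b = G.t a ∧ ¬ G.rel b a

/-- `b` may follow `a` in a forbidden path: `s b = t a` and `ba ∈ I`. -/
def FStep (a b : G.A) : Prop := G.s b = G.t a ∧ G.rel b a

/-- A permitted path `α_n ⋯ α_1`, encoded as the list `[α_1, …, α_n]` of its arrows: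
nonempty, with pairwise distinct arrows, consecutive arrows composable and with
`α_{i+1} α_i ∉ I`. -/
def IsPermPath (l : List G.A) : Prop := l ≠ [] ∧ l.Nodup ∧ l.Chain' G.PStep

/-- A permitted cycle: a permitted path which closes up, with `α₁ α_n ∉ I`. -/
def IsPermCycle (l : List G.A) : Prop :=
  G.IsPermPath l ∧ ∀ a ∈ l.head?, ∀ b ∈ l.getLast?, G.PStep b a

/-- A permitted thread: a permitted path which is not a permitted cycle and cannot be
extended by any arrow on either side. -/
def IsPermThread (l : List G.A) : Prop :=
  G.IsPermPath l ∧ ¬ G.IsPermCycle l ∧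
    (∀ b ∈ l.getLast?, ∀ c : G.A, ¬ G.PStep b c) ∧
    (∀ a ∈ l.head?, ∀ c : G.A, ¬ G.PStep c a)

/-- A forbidden path `β_n ⋯ β_1`, encoded as the list `[β_1, …, β_n]` of its arrows:
nonempty, with pairwise distinct arrows, consecutive arrows composable and with
`β_{i+1} β_i ∈ I`. -/
def IsForbPath (l : List G.A) : Prop := l ≠ [] ∧ l.Nodup ∧ l.Chain' G.FStep

/-- A forbidden cycle: a forbidden path which closes up, with `β₁ β_n ∈ I`. -/
def IsForbCycle (l : List G.A) : Prop :=
  G.IsForbPath l ∧ ∀ a ∈ l.head?, ∀ b ∈ l.getLast?, G.FStep b a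

/-- A forbidden thread: a forbidden path which is not a forbidden cycle and cannot be
extended by any arrow on either side. -/
def IsForbThread (l : List G.A) : Prop :=
  G.IsForbPath l ∧ ¬ G.IsForbCycle l ∧
    (∀ b ∈ l.getLast?, ∀ c : G.A, ¬ G.FStep b c) ∧
    (∀ a ∈ l.head?, ∀ c : G.A, ¬ G.FStep c a)

/-- A transition vertex: exactly one incoming arrow `α`, exactly one outgoing arrow `β`,
and `βα ∉ I`. -/
def IsTransition (v : G.V) : Prop :=
  ∃ α β : G.A, G.t α = v ∧ G.s β = v ∧ (∀ α', G.t α' = v → α' = α) ∧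
    (∀ β', G.s β' = v → β' = β) ∧ ¬ G.rel β α

/-- A crossing vertex: exactly two incoming arrows `α₁ ≠ α₂`, exactly two outgoing arrows
`β₁ ≠ β₂`, and (after reindexing) `β_j α_i ∈ I` iff `i = j`. -/
def IsCrossing (v : G.V) : Prop :=
  ∃ α₁ α₂ β₁ β₂ : G.A, α₁ ≠ α₂ ∧ β₁ ≠ β₂ ∧
    G.t α₁ = v ∧ G.t α₂ = v ∧ G.s β₁ = v ∧ G.s β₂ = v ∧
    (∀ α, G.t α = v → α = α₁ ∨ α = α₂) ∧ (∀ β, G.s β = v → β = β₁ ∨ β = β₂) ∧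
    G.rel β₁ α₁ ∧ G.rel β₂ α₂ ∧ ¬ G.rel β₁ α₂ ∧ ¬ G.rel β₂ α₁

/-- The path encoded by `l` starts at the vertex `v` (source of its first arrow). -/
def StartsAt (l : List G.A) (v : G.V) : Prop := ∀ a ∈ l.head?, G.s a = v

/-- The path encoded by `l` ends at the vertex `v` (target of its last arrow). -/
def EndsAt (l : List G.A) (v : G.V) : Prop := ∀ b ∈ l.getLast?, G.t b = v

end GentleQuiver

namespace GentleQuiver

variable (G : GentleQuiver)

/-- The opposite gentle quiver, with all arrows reversed. -/
def op : GentleQuiver where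
  V := G.V
  A := G.A
  fintypeV := G.fintypeV
  fintypeA := G.fintypeA
  s := G.t
  t := G.s
  rel β α := G.rel α β
  rel_comp := fun β α h => (G.rel_comp α β h).symm
  at_most_two_in := fun v α β γ ha hb hc => G.at_most_two_out v α β γ ha hb hc
  at_most_two_out := fun v α β γ ha hb hc => G.at_most_two_in v α β γ ha hb hc
  succ_nonrel_unique := fun α β β' h h' hr hr' => G.pred_nonrel_unique α β β' h h' hr hr'
  succ_rel_unique := fun α β β' h h' hr hr' => G.pred_rel_unique α β β' h h' hr hr'
  pred_nonrel_unique := fun α γ γ' h h' hr hr' => G.succ_nonrel_unique α γ γ' h h' hr hr'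
  pred_rel_unique := fun α γ γ' h h' hr hr' => G.succ_rel_unique α γ γ' h h' hr hr'

lemma pstep_op {a b : G.A} : G.op.PStep a b ↔ G.PStep b a :=
  ⟨fun h => ⟨h.1.symm, h.2⟩, fun h => ⟨h.1.symm, h.2⟩⟩

lemma permPath_rev {l : List G.A} (hl : G.IsPermPath l) : G.op.IsPermPath l.reverse := by
  obtain ⟨hne, hnd, hch⟩ := hl
  refine ⟨by change (l.reverse : List G.A) ≠ []; simpa using hne, by change (l.reverse : List G.A).Nodup; simpa using hnd, ?_⟩
  refine List.isChain_reverse.mpr ?_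
  exact hch.imp fun a b h => G.pstep_op.mpr h

lemma permThread_rev {l : List G.A} (hl : G.IsPermThread l) :
    G.op.IsPermThread l.reverse := by
  obtain ⟨hp, hnc, hlast, hhead⟩ := hl
  refine ⟨G.permPath_rev hp, ?_, ?_, ?_⟩
  · rintro ⟨_, hcyc⟩
    refine hnc ⟨hp, fun a ha b hb => ?_⟩
    exact G.pstep_op.mp (hcyc b (by change b ∈ l.reverse.head?; rwa [List.head?_reverse]) a (by change a ∈ l.reverse.getLast?; rwa [List.getLast?_reverse]))
  · intro b hb c hc
    exact hhead b (by change b ∈ l.reverse.getLast? at hb; rwa [List.getLast?_reverse] at hb) c (G.pstep_op.mp hc)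
  · intro a ha c hc
    exact hlast a (by change a ∈ l.reverse.head? at ha; rwa [List.head?_reverse] at ha) c (G.pstep_op.mp hc)

/-- Under hypothesis (2), every arrow has a permitted successor. -/
lemma succ_exists (h2 : ∀ l : List G.A, ¬ G.IsPermThread l) (α : G.A) :
    ∃ β, G.PStep α β := by
  by_contra hno
  push_neg at hno
  suffices H : ∀ n (l : List G.A), Fintype.card G.A ≤ l.length + n →
      G.IsPermPath l → l.getLast? = some α → False by
    exact H (Fintype.card G.A) [α] (by simp)
      ⟨by simp, by simp, by constructor⟩ (by simp)
  intro n
  induction n using Nat.strong_induction_on with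
  | _ n IH =>
    intro l hlen hpath hlast
    obtain ⟨hne, hnd, hch⟩ := hpath
    by_cases hext : ∃ c, G.PStep c (l.head hne)
    · obtain ⟨c, hc⟩ := hext
      by_cases hmem : c ∈ l
      · obtain ⟨i, hi, hci⟩ := List.mem_iff_getElem.mp hmem
        by_cases hii : i + 1 < l.length
        · have hstep : G.PStep c l[i + 1] := by
            have := List.isChain_iff_getElem.mp hch i (by omega)
            simpa [hci] using this
          have heq : l[i + 1] = l.head hne :=
            G.succ_nonrel_unique c _ _ hstep.1 hc.1 hstep.2 hc.2
          have h0 : l.head hne = l[0]'(by omega) := (List.getElem_zero (by omega)).symm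
          rw [h0] at heq
          have : i + 1 = 0 := (hnd.getElem_inj_iff).mp heq
          omega
        · have hi' : i = l.length - 1 := by omega
          subst hi'
          have h1 : l.getLast hne = α := by
            rw [List.getLast?_eq_getLast hne] at hlast
            exact Option.some_injective _ hlast
          have hcα : c = α := by
            rw [← h1, List.getLast_eq_getElem hne]
            exact hci.symm
          exact hno (l.head hne) (hcα ▸ hc)
      · -- extend the path
        have hnd' : (c :: l).Nodup := List.nodup_cons.mpr ⟨hmem, hnd⟩
        have hlen' : l.length + 1 ≤ Fintype.card G.A := by
          simpa using hnd'.length_le_card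
        have hn : 0 < n := by omega
        refine IH (n - 1) (by omega) (c :: l)
          (by simp only [List.length_cons]; omega) ⟨by simp, hnd', ?_⟩ ?_
        · refine List.isChain_cons.mpr ⟨fun y hy => ?_, hch⟩
          rw [List.head?_eq_head hne, Option.mem_some_iff] at hy
          exact hy ▸ hc
        · cases l with
          | nil => exact absurd rfl hne
          | cons a l' => simpa using hlast
    · push_neg at hext
      refine h2 l ⟨⟨hne, hnd, hch⟩, ?_, ?_, ?_⟩
      · rintro ⟨_, hcyc⟩
        have := hcyc (l.head hne) (List.head?_eq_head hne) α hlast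
        exact hno _ this
      · intro b hb c hc
        rw [Option.mem_def, hlast, Option.some_inj] at hb
        exact hno c (hb ▸ hc)
      · intro a ha c hc
        rw [Option.mem_def, List.head?_eq_head hne, Option.some_inj] at ha
        exact hext c (ha ▸ hc)

/-- Under hypothesis (2), every arrow has a permitted predecessor. -/
lemma pred_exists (h2 : ∀ l : List G.A, ¬ G.IsPermThread l) (α : G.A) :
    ∃ γ, G.PStep γ α := by
  have h2' : ∀ l : List G.A, ¬ G.op.IsPermThread l := fun l hl =>
    h2 l.reverse (G.op.permThread_rev hl)
  obtain ⟨β, hβ⟩ := G.op.succ_exists h2' α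
  exact ⟨β, G.pstep_op.mp hβ⟩

/-- If every arrow has a successor and a predecessor, every arrow lies on a
permitted cycle. -/
lemma cycle_of (hs : ∀ a : G.A, ∃ b, G.PStep a b) (hp : ∀ a : G.A, ∃ c, G.PStep c a)
    (α : G.A) : ∃ l, G.IsPermCycle l ∧ α ∈ l := by
  choose σ hσ using hs
  have hinj : Function.Injective σ := by
    intro a a' h
    refine G.pred_nonrel_unique (σ a) a a' (hσ a).1.symm ?_ (hσ a).2 ?_
    · rw [h]; exact (hσ a').1.symm
    · rw [h]; exact (hσ a').2
  have hper : ∃ k, 0 < k ∧ σ^[k] α = α := by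
    obtain ⟨i, j, hij, hfij⟩ := Finite.exists_ne_map_eq_of_infinite (fun n : ℕ => σ^[n] α)
    rcases Nat.lt_or_ge i j with hlt | hge
    · refine ⟨j - i, by omega, hinj.iterate i ?_⟩
      rw [← Function.iterate_add_apply, show i + (j - i) = j by omega]
      exact hfij.symm
    · have hlt : j < i := by omega
      refine ⟨i - j, by omega, hinj.iterate j ?_⟩
      rw [← Function.iterate_add_apply, show j + (i - j) = i by omega]
      exact hfij
  classical
  obtain ⟨k, hk0, hkα, hmin⟩ :
      ∃ k, 0 < k ∧ σ^[k] α = α ∧ ∀ j, 0 < j → j < k → σ^[j] α ≠ α :=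
    ⟨Nat.find hper, (Nat.find_spec hper).1, (Nat.find_spec hper).2,
      fun j hj hlt heq => Nat.find_min hper hlt ⟨hj, heq⟩⟩
  obtain ⟨m, rfl⟩ : ∃ m, k = m + 1 := ⟨k - 1, by omega⟩
  set f : ℕ → G.A := fun i => σ^[i] α with hf
  have key : ∀ i j : ℕ, i < j → j < m + 1 → f i = f j → False := by
    intro i j hij hjk hfeq
    refine hmin (j - i) (by omega) (by omega) (hinj.iterate i ?_)
    rw [← Function.iterate_add_apply, show i + (j - i) = j by omega]
    exact hfeq.symm
  refine ⟨(List.range (m + 1)).map f, ⟨⟨?_, ?_, ?_⟩, ?_⟩, ?_⟩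
  · simp [List.range_eq_nil]
  · refine List.Nodup.map_on ?_ List.nodup_range
    intro i hi j hj hfeq
    rw [List.mem_range] at hi hj
    by_contra hne
    rcases Nat.lt_or_ge i j with hlt | hge
    · exact key i j hlt hj hfeq
    · exact key j i (by omega) hi hfeq.symm
  · change List.IsChain _ _; rw [List.isChain_map, List.isChain_range_succ]
    intro i hi
    have : f (i + 1) = σ (f i) := Function.iterate_succ_apply' σ i α
    rw [this]
    exact hσ (f i)
  · intro a ha b hb
    have hhead : ((List.range (m + 1)).map f).head? = some α := by
      rw [List.range_succ_eq_map]
      simp [hf]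
    have hlast : ((List.range (m + 1)).map f).getLast? = some (f m) := by
      rw [List.range_succ, List.map_append]
      simp
    rw [Option.mem_def, hhead, Option.some_inj] at ha
    rw [Option.mem_def, hlast, Option.some_inj] at hb
    subst ha hb
    have hfm : σ (f m) = α := by
      have h' : σ^[m + 1] α = σ (σ^[m] α) := Function.iterate_succ_apply' σ m α
      rw [hkα] at h'
      exact h'.symm
    rw [← hfm]
    exact hσ (f m)
  · exact List.mem_map.mpr ⟨0, List.mem_range.mpr (by omega), rfl⟩

/-- If every arrow has a successor and a predecessor, every vertex is a transition
or crossing vertex. -/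
lemma cond_one (h : ∀ v : G.V, ∃ α : G.A, G.s α = v ∨ G.t α = v)
    (hs : ∀ a : G.A, ∃ b, G.PStep a b) (hp : ∀ a : G.A, ∃ c, G.PStep c a)
    (v : G.V) : G.IsTransition v ∨ G.IsCrossing v := by
  have hin : ∃ α, G.t α = v := by
    obtain ⟨a, ha | ha⟩ := h v
    · obtain ⟨c, hc⟩ := hp a
      exact ⟨c, by rw [← hc.1, ha]⟩
    · exact ⟨a, ha⟩
  obtain ⟨α, hα⟩ := hin
  obtain ⟨β, hβ⟩ := hs α
  have hsβ : G.s β = v := by rw [hβ.1, hα]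
  by_cases htwo : ∃ α₂, G.t α₂ = v ∧ α₂ ≠ α
  · -- crossing
    right
    obtain ⟨α₂, hα₂, hne⟩ := htwo
    obtain ⟨β₂, hβ₂⟩ := hs α₂
    have hsβ₂ : G.s β₂ = v := by rw [hβ₂.1, hα₂]
    have hβne : β₂ ≠ β := by
      intro h'
      refine hne (G.pred_nonrel_unique β α₂ α ?_ hβ.1.symm ?_ hβ.2)
      · rw [← h']; exact hβ₂.1.symm
      · rw [← h']; exact hβ₂.2
    have hrel1 : G.rel β₂ α := by
      by_contra hr
      exact hβne.symm (G.succ_nonrel_unique α β β₂ hβ.1 (by rw [hsβ₂, hα]) hβ.2 hr)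
    have hrel2 : G.rel β α₂ := by
      by_contra hr
      exact hβne (G.succ_nonrel_unique α₂ β₂ β hβ₂.1 (by rw [hsβ, hα₂]) hβ₂.2 hr)
    refine ⟨α, α₂, β₂, β, hne.symm, hβne, hα, hα₂, hsβ₂, hsβ, ?_, ?_, hrel1, hrel2,
      hβ₂.2, hβ.2⟩
    · intro γ hγ
      rcases G.at_most_two_in v γ α α₂ hγ hα hα₂ with h' | h' | h'
      · exact Or.inl h'
      · exact Or.inr h'
      · exact absurd h'.symm hne
    · intro γ hγ
      rcases G.at_most_two_out v γ β₂ β hγ hsβ₂ hsβ with h' | h' | h'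
      · exact Or.inl h'
      · exact Or.inr h'
      · exact absurd h' hβne
  · -- transition
    left
    push_neg at htwo
    have huin : ∀ α', G.t α' = v → α' = α := htwo
    refine ⟨α, β, hα, hsβ, huin, ?_, hβ.2⟩
    intro β' hβ'
    obtain ⟨γ, hγ⟩ := hp β'
    have hγα : γ = α := huin γ (by rw [← hγ.1, hβ'])
    subst hγα
    exact G.succ_nonrel_unique γ β' β hγ.1 hβ.1 hγ.2 hβ.2

/-- Condition (1) gives successors. -/
lemma one_to_succ (h1 : ∀ v : G.V, G.IsTransition v ∨ G.IsCrossing v) (a : G.A) :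
    ∃ b, G.PStep a b := by
  rcases h1 (G.t a) with ⟨α, β, htα, hsβ, huin, huout, hnr⟩ |
    ⟨α₁, α₂, β₁, β₂, _, _, ht₁, ht₂, hs₁, hs₂, huin, huout, hr₁, hr₂, hnr₁, hnr₂⟩
  · have ha : a = α := huin a rfl
    exact ⟨β, hsβ, ha ▸ hnr⟩
  · rcases huin a rfl with rfl | rfl
    · exact ⟨β₂, by rw [hs₂, ht₁], hnr₂⟩
    · exact ⟨β₁, by rw [hs₁, ht₂], hnr₁⟩

/-- Condition (1) gives predecessors. -/
lemma one_to_pred (h1 : ∀ v : G.V, G.IsTransition v ∨ G.IsCrossing v) (a : G.A) :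
    ∃ c, G.PStep c a := by
  rcases h1 (G.s a) with ⟨α, β, htα, hsβ, huin, huout, hnr⟩ |
    ⟨α₁, α₂, β₁, β₂, _, _, ht₁, ht₂, hs₁, hs₂, huin, huout, hr₁, hr₂, hnr₁, hnr₂⟩
  · have ha : a = β := huout a rfl
    exact ⟨α, by rw [htα], ha ▸ hnr⟩
  · rcases huout a rfl with rfl | rfl
    · exact ⟨α₂, by rw [ht₂, hs₁], hnr₁⟩
    · exact ⟨α₁, by rw [ht₁, hs₂], hnr₂⟩

/-- In a permitted cycle, every member has a permitted successor. -/
lemma cycle_succ {m : List G.A} (hm : G.IsPermCycle m) {b : G.A} (hb : b ∈ m) :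
    ∃ c, G.PStep b c := by
  obtain ⟨⟨hne, hnd, hch⟩, hclose⟩ := hm
  obtain ⟨i, hi, hbi⟩ := List.mem_iff_getElem.mp hb
  by_cases hii : i + 1 < m.length
  · refine ⟨m[i + 1], ?_⟩
    have := List.isChain_iff_getElem.mp hch i (by omega)
    simpa [hbi] using this
  · refine ⟨m.head hne, ?_⟩
    have hi' : i = m.length - 1 := by omega
    subst hi'
    have hbl : b = m.getLast hne := by
      rw [List.getLast_eq_getElem hne]
      exact hbi.symm
    have := hclose (m.head hne) (List.head?_eq_head hne)
      (m.getLast hne) (List.getLast?_eq_getLast hne)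
    exact hbl ▸ this

end GentleQuiver


/-- for a gentle quiver `(Q, I)` in which every vertex is the source or
target of at least one arrow, the following are equivalent:
(1) every vertex is a transition vertex or a crossing vertex;
(2) there are no permitted threads;
(3) every arrow lies on a permitted cycle. -/
theorem stmt3 (G : GentleQuiver) (h : ∀ v : G.V, ∃ α : G.A, G.s α = v ∨ G.t α = v) :
    List.TFAE
      [∀ v : G.V, G.IsTransition v ∨ G.IsCrossing v,
        ∀ l : List G.A, ¬ G.IsPermThread l,
        ∀ α : G.A, ∃ l : List G.A, G.IsPermCycle l ∧ α ∈ l] := by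
  tfae_have 1 → 3 := fun h1 => G.cycle_of (G.one_to_succ h1) (G.one_to_pred h1)
  tfae_have 3 → 2 := by
    intro h3 l hl
    obtain ⟨⟨hne, hnd, hch⟩, hnc, hlast, hhead⟩ := hl
    obtain ⟨m, hm, hbm⟩ := h3 (l.getLast hne)
    obtain ⟨c, hc⟩ := G.cycle_succ hm hbm
    exact hlast (l.getLast hne) (by rw [List.getLast?_eq_getLast hne]; rfl) c hc
  tfae_have 2 → 1 := fun h2 => G.cond_one h (G.succ_exists h2) (G.pred_exists h2)
  tfae_finish
end

section
/- Let (Q,I) be a gentle quiver in which every vertex is a transition vertex or a crossing vertex. Then: for every transition vertex j there exists a unique forbidden thread f with s(f) = j; the target t(f) is again a transition vertex; every forbidden thread of (Q,I) starts at a transition vertex (so forbidden threads are in bijection with transition vertices via f ↦ s(f)); and the map κ : Q₀ᵗ → Q₀ᵗ sending a transition vertex j to the target of the unique forbidden thread starting at j is a permutation of the set Q₀ᵗ of transition vertices. -/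
namespace GentleQuiver

variable {G : GentleQuiver}

lemma fstep_succ_unique {a b b' : G.A} (h : G.FStep a b) (h' : G.FStep a b') : b = b' :=
  G.succ_rel_unique a b b' h.1 h'.1 h.2 h'.2

lemma fstep_pred_unique {a b b' : G.A} (h : G.FStep b a) (h' : G.FStep b' a) : b = b' :=
  G.pred_rel_unique a b b' h.1.symm h'.1.symm h.2 h'.2

/-- Generic: two maximal chains for a relation with unique successors, having the same
head, coincide. -/
lemma chain_unique {α : Type*} {R : α → α → Prop}
    (hu : ∀ a b b', R a b → R a b' → b = b') :
    ∀ l l' : List α, l.Chain' R → l'.Chain' R → l.head? = l'.head? →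
      (∀ b ∈ l.getLast?, ∀ c, ¬ R b c) → (∀ b ∈ l'.getLast?, ∀ c, ¬ R b c) → l = l' := by
  intro l
  induction l with
  | nil =>
    intro l' _ _ hh _ _
    cases l' with
    | nil => rfl
    | cons a l' => simp at hh
  | cons a l ih =>
    intro l' hc hc' hh hm hm'
    cases l' with
    | nil => simp at hh
    | cons a' l' =>
      obtain rfl : a = a' := by simpa using hh
      cases l with
      | nil =>
        cases l' with
        | nil => rfl
        | cons b' l' =>
          exact absurd (List.isChain_cons_cons.mp hc').1 (hm a (by simp) b')
      | cons b l =>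
        cases l' with
        | nil =>
          exact absurd (List.isChain_cons_cons.mp hc).1 (hm' a (by simp) b)
        | cons b' l' =>
          obtain rfl : b = b' :=
            hu a b b' (List.isChain_cons_cons.mp hc).1 (List.isChain_cons_cons.mp hc').1
          have := ih (b :: l') (List.isChain_cons_cons.mp hc).2 (List.isChain_cons_cons.mp hc').2
            rfl (by simpa [List.getLast?_cons_cons] using hm)
            (by simpa [List.getLast?_cons_cons] using hm')
          rw [this]

/-- In a nodup forbidden chain whose head admits no predecessor, an arrow following the
last element cannot already occur in the chain. -/
lemma noext {l : List G.A} (hc : l.Chain' G.FStep) (hn : l.Nodup)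
    (hh : ∀ a ∈ l.head?, ∀ c, ¬ G.FStep c a)
    {b : G.A} (hb : b ∈ l.getLast?) {c : G.A} (hs : G.FStep b c) : c ∉ l := by
  intro hcl
  obtain ⟨l₁, l₂, hl⟩ := List.append_of_mem hcl
  subst hl
  cases l₁ with
  | nil => exact hh c (by simp) b hs
  | cons x l₁ =>
    have hch := (List.isChain_append.mp hc).2.2
    have hpc : G.FStep ((x :: l₁).getLast (by simp)) c :=
      hch _ (by rw [List.getLast?_eq_getLast (by simp)]; rfl) c (by simp)
    have hbp : b = (x :: l₁).getLast (by simp) := fstep_pred_unique hs hpc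
    have hb2 : b ∈ c :: l₂ := by
      rw [List.getLast?_append_of_ne_nil _ (by simp)] at hb
      exact List.mem_of_mem_getLast? hb
    have hb1 : b ∈ x :: l₁ := hbp ▸ List.getLast_mem _
    exact (List.disjoint_left.mp (List.nodup_append'.mp hn).2.2 hb1) hb2

lemma head_max {j : G.V} (hj : G.IsTransition j) {l : List G.A} (hl : G.StartsAt l j) :
    ∀ a ∈ l.head?, ∀ c, ¬ G.FStep c a := by
  obtain ⟨α, β, hα, hβ, hαu, hβu, hrel⟩ := hj
  intro a ha c hFc
  have hsa : G.s a = j := hl a ha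
  have haβ : a = β := hβu a hsa
  have hcα : c = α := hαu c (by rw [← hFc.1, hsa])
  exact hrel (haβ ▸ hcα ▸ hFc.2)

lemma thread_of_no_ext {j : G.V} {l : List G.A} (hj : G.IsTransition j)
    (hp : G.IsForbPath l) (hst : G.StartsAt l j)
    (hend : ∀ b ∈ l.getLast?, ∀ c, ¬ G.FStep b c) : G.IsForbThread l := by
  refine ⟨hp, ?_, hend, head_max hj hst⟩
  rintro ⟨_, hcyc⟩
  obtain ⟨a, ha⟩ : ∃ a, l.head? = some a := by
    cases l with
    | nil => exact absurd rfl hp.1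
    | cons x l => exact ⟨x, rfl⟩
  obtain ⟨b, hb⟩ : ∃ b, l.getLast? = some b := by
    cases l with
    | nil => exact absurd rfl hp.1
    | cons x l => exact ⟨_, List.getLast?_eq_getLast (by simp)⟩
  exact head_max hj hst a ha b (hcyc a ha b hb)

lemma exists_thread_aux {j : G.V} (hj : G.IsTransition j) :
    ∀ (n : ℕ) (l : List G.A), Fintype.card G.A ≤ l.length + n → G.IsForbPath l →
      G.StartsAt l j → ∃ l', G.IsForbThread l' ∧ G.StartsAt l' j := by
  intro n
  induction n with
  | zero =>
    intro l hlen hp hst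
    refine ⟨l, thread_of_no_ext hj hp hst ?_, hst⟩
    intro b hb c hFc
    have hni : c ∉ l := noext hp.2.2 hp.2.1 (head_max hj hst) hb hFc
    have hnd : (c :: l).Nodup := List.nodup_cons.mpr ⟨hni, hp.2.1⟩
    have := hnd.length_le_card
    simp at this
    omega
  | succ n ih =>
    intro l hlen hp hst
    by_cases h : ∃ b ∈ l.getLast?, ∃ c, G.FStep b c
    · obtain ⟨b, hb, c, hFc⟩ := h
      have hni : c ∉ l := noext hp.2.2 hp.2.1 (head_max hj hst) hb hFc
      have hne : l ≠ [] := hp.1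
      refine ih (l ++ [c]) (by simp; omega) ⟨by simp, ?_, ?_⟩ ?_
      · exact List.nodup_append'.mpr ⟨hp.2.1, List.nodup_singleton c,
          by intro x hx hx'; simp at hx'; subst hx'; exact hni hx⟩
      · refine List.isChain_append.mpr ⟨hp.2.2, List.isChain_singleton c, ?_⟩
        intro x hx y hy
        simp at hy; subst hy
        rw [hb] at hx; simp at hx; subst hx
        exact hFc
      · intro a ha
        apply hst
        cases l with
        | nil => exact absurd rfl hne
        | cons x l => simpa using ha
    · push_neg at h
      exact ⟨l, thread_of_no_ext hj hp hst h, hst⟩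

lemma exists_unique_thread {j : G.V} (hj : G.IsTransition j) :
    ∃! l : List G.A, G.IsForbThread l ∧ G.StartsAt l j := by
  obtain ⟨α, β, hα, hβ, hαu, hβu, hrel⟩ := hj
  have hj' : G.IsTransition j := ⟨α, β, hα, hβ, hαu, hβu, hrel⟩
  obtain ⟨l, hl, hst⟩ := exists_thread_aux hj' (Fintype.card G.A) [β]
    (by simp) ⟨by simp, List.nodup_singleton β, List.isChain_singleton β⟩
    (by intro a ha; simp at ha; subst ha; exact hβ)
  refine ⟨l, ⟨hl, hst⟩, ?_⟩
  rintro l' ⟨hl', hst'⟩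
  have hhead : ∀ (m : List G.A), G.IsForbThread m → G.StartsAt m j → m.head? = some β := by
    intro m hm hsm
    cases m with
    | nil => exact absurd rfl hm.1.1
    | cons x m => simpa using hβu x (hsm x rfl)
  exact chain_unique (R := G.FStep) (fun a b b' => fstep_succ_unique) l' l hl'.1.2.2 hl.1.2.2
    (by rw [hhead l' hl' hst', hhead l hl hst]) hl'.2.2.1 hl.2.2.1

end GentleQuiver

/-- let `(Q, I)` be a gentle quiver in which every vertex is a transition
vertex or a crossing vertex.  Then: every transition vertex `j` is the start of a unique
forbidden thread; the target of that forbidden thread is again a transition vertex; every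
forbidden thread starts at a transition vertex (so forbidden threads are in bijection with
transition vertices via `f ↦ s(f)`); and any map `κ` on the set of transition vertices
sending `j` to the target of the forbidden thread starting at `j` is a permutation. -/
theorem stmt4 (G : GentleQuiver) (hG : ∀ v : G.V, G.IsTransition v ∨ G.IsCrossing v) :
    (∀ j : G.V, G.IsTransition j →
      ∃! l : List G.A, G.IsForbThread l ∧ G.StartsAt l j) ∧
    (∀ (j : G.V) (l : List G.A), G.IsTransition j → G.IsForbThread l → G.StartsAt l j →
      ∀ b ∈ l.getLast?, G.IsTransition (G.t b)) ∧
    (∀ l : List G.A, G.IsForbThread l → ∀ a ∈ l.head?, G.IsTransition (G.s a)) ∧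
    (∀ κ : {v : G.V // G.IsTransition v} → {v : G.V // G.IsTransition v},
      (∀ (j : {v : G.V // G.IsTransition v}) (l : List G.A),
        G.IsForbThread l → G.StartsAt l j.1 → G.EndsAt l (κ j).1) →
      Function.Bijective κ) := by
  have part1 : ∀ j : G.V, G.IsTransition j →
      ∃! l : List G.A, G.IsForbThread l ∧ G.StartsAt l j :=
    fun j hj => GentleQuiver.exists_unique_thread hj
  have part2 : ∀ (l : List G.A), G.IsForbThread l →
      ∀ b ∈ l.getLast?, G.IsTransition (G.t b) := by
    intro l hl b hb
    rcases hG (G.t b) with h | h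
    · exact h
    · exfalso
      obtain ⟨α₁, α₂, β₁, β₂, _, _, hα₁, hα₂, hβ₁, hβ₂, hin, hout, h11, h22, _, _⟩ := h
      rcases hin b rfl with rfl | rfl
      · exact hl.2.2.1 b hb β₁ ⟨hβ₁, h11⟩
      · exact hl.2.2.1 b hb β₂ ⟨hβ₂, h22⟩
  have part3 : ∀ l : List G.A, G.IsForbThread l →
      ∀ a ∈ l.head?, G.IsTransition (G.s a) := by
    intro l hl a ha
    rcases hG (G.s a) with h | h
    · exact h
    · exfalso
      obtain ⟨α₁, α₂, β₁, β₂, _, _, hα₁, hα₂, hβ₁, hβ₂, hin, hout, h11, h22, _, _⟩ := h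
      rcases hout a rfl with rfl | rfl
      · exact hl.2.2.2 a ha α₁ ⟨hα₁.symm, h11⟩
      · exact hl.2.2.2 a ha α₂ ⟨hα₂.symm, h22⟩
  refine ⟨part1, fun j l _ hl _ => part2 l hl, part3, ?_⟩
  intro κ hκ
  rw [← Finite.injective_iff_bijective]
  intro j₁ j₂ hjj
  obtain ⟨l₁, ⟨ht₁, hs₁⟩, _⟩ := part1 j₁.1 j₁.2
  obtain ⟨l₂, ⟨ht₂, hs₂⟩, _⟩ := part1 j₂.1 j₂.2
  have he₁ := hκ j₁ l₁ ht₁ hs₁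
  have he₂ := hκ j₂ l₂ ht₂ hs₂
  obtain ⟨α, β, hα, hβ, hαu, hβu, hrel⟩ := (κ j₁).2
  have hlast : ∀ (m : List G.A), G.IsForbThread m → G.EndsAt m (κ j₁).1 →
      m.getLast? = some α := by
    intro m hm hem
    obtain ⟨b, hb⟩ : ∃ b, m.getLast? = some b := by
      cases m with
      | nil => exact absurd rfl hm.1.1
      | cons x m => exact ⟨_, List.getLast?_eq_getLast (by simp)⟩
    rw [hb]
    exact congrArg some (hαu b (hem b hb))
  have hl₁ := hlast l₁ ht₁ he₁
  have hl₂ := hlast l₂ ht₂ (by rw [hjj]; exact he₂)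
  have hrev : l₁.reverse = l₂.reverse := by
    refine GentleQuiver.chain_unique (R := fun a b => G.FStep b a)
      (fun a b b' h h' => GentleQuiver.fstep_pred_unique h h') _ _
      ?_ ?_ ?_ ?_ ?_
    · exact (List.isChain_reverse).mpr ht₁.1.2.2
    · exact (List.isChain_reverse).mpr ht₂.1.2.2
    · rw [List.head?_reverse, List.head?_reverse, hl₁, hl₂]
    · intro b hb c
      rw [List.getLast?_reverse] at hb
      exact ht₁.2.2.2 b hb c
    · intro b hb c
      rw [List.getLast?_reverse] at hb
      exact ht₂.2.2.2 b hb c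
  have hll : l₁ = l₂ := List.reverse_injective hrev
  obtain ⟨a, ha⟩ : ∃ a, l₁.head? = some a := by
    cases l₁ with
    | nil => exact absurd rfl ht₁.1.1
    | cons x m => exact ⟨x, rfl⟩
  have e1 : G.s a = j₁.1 := hs₁ a ha
  have e2 : G.s a = j₂.1 := hs₂ a (by rw [← hll]; exact ha)
  exact Subtype.ext (e1 ▸ e2)
end

section
/- Let (Q,I) be a gentle quiver in which every vertex is a transition vertex or a crossing vertex. Then: for every arrow α there exists exactly one arrow σ(α) with s(σ(α)) = t(α) and σ(α)α ∉ I; the resulting map σ : Q₁ → Q₁ is a permutation of the set of arrows; and for every arrow α there is a unique permitted cycle whose first arrow is α, namely σ^{p−1}(α)⋯σ(α)α where p is the cardinality of the σ-orbit of α. In particular the permitted cycles of (Q,I), up to rotation, are in bijection with the σ-orbits in Q₁. -/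
private theorem GentleQuiver.exists_unique_succ (G : GentleQuiver)
    (hG : ∀ v : G.V, G.IsTransition v ∨ G.IsCrossing v) (α : G.A) :
    ∃! β : G.A, G.s β = G.t α ∧ ¬ G.rel β α := by
  rcases hG (G.t α) with ⟨a, b, hta, hsb, hin, hout, hnr⟩ |
    ⟨a₁, a₂, b₁, b₂, hane, hbne, ht1, ht2, hs1, hs2, hin, hout, hr11, hr22, hnr12, hnr21⟩
  · have hαa : α = a := hin α rfl
    subst hαa
    exact ⟨b, ⟨hsb, hnr⟩, fun β' h => hout β' h.1⟩
  · rcases hin α rfl with h | h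
    · subst h
      refine ⟨b₂, ⟨hs2, hnr21⟩, fun β' h => ?_⟩
      rcases hout β' h.1 with h' | h'
      · subst h'; exact absurd hr11 h.2
      · exact h'
    · subst h
      refine ⟨b₁, ⟨hs1, hnr12⟩, fun β' h => ?_⟩
      rcases hout β' h.1 with h' | h'
      · exact h'
      · subst h'; exact absurd hr22 h.2

/-- let `(Q, I)` be a gentle quiver in which every vertex is a transition or
crossing vertex.  Then every arrow `α` has a unique successor `σ(α)` with
`s(σ(α)) = t(α)` and `σ(α)α ∉ I`; any map `σ` satisfying this specification is a
permutation of the arrows; for every arrow `α` there is a unique permitted cycle starting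
with `α`, namely `σ^{p−1}(α) ⋯ σ(α) α` where `p` is the cardinality of the `σ`-orbit of
`α` (its minimal period); and the permitted cycles up to rotation are in bijection with
the `σ`-orbits of arrows. -/
theorem stmt5 (G : GentleQuiver) (hG : ∀ v : G.V, G.IsTransition v ∨ G.IsCrossing v) :
    (∀ α : G.A, ∃! β : G.A, G.s β = G.t α ∧ ¬ G.rel β α) ∧
    (∀ σ : G.A → G.A, (∀ α : G.A, G.s (σ α) = G.t α ∧ ¬ G.rel (σ α) α) →
      Function.Bijective σ ∧
      (∀ α : G.A,
        G.IsPermCycle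
          (List.ofFn (fun i : Fin (Function.minimalPeriod σ α) => σ^[(i : ℕ)] α)) ∧
        ∀ l : List G.A, G.IsPermCycle l → l.head? = some α →
          l = List.ofFn (fun i : Fin (Function.minimalPeriod σ α) => σ^[(i : ℕ)] α)) ∧
      Nonempty
        (Quot (fun l l' : {l : List G.A // G.IsPermCycle l} => ∃ k, l'.1 = l.1.rotate k) ≃
          Quot (fun a b : G.A => σ a = b))) := by
  have hEU := G.exists_unique_succ hG
  refine ⟨hEU, fun σ hσ => ?_⟩
  -- any arrow satisfying the successor spec equals σ α
  have hu : ∀ α β, G.s β = G.t α → ¬ G.rel β α → β = σ α := fun α β h1 h2 =>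
    (hEU α).unique ⟨h1, h2⟩ ⟨(hσ α).1, (hσ α).2⟩
  have hinj : Function.Injective σ := by
    intro a b h
    exact G.pred_nonrel_unique (σ a) a b ((hσ a).1).symm
      (by rw [h]; exact ((hσ b).1).symm) (hσ a).2 (by rw [h]; exact (hσ b).2)
  have hbij : Function.Bijective σ := Finite.injective_iff_bijective.mp hinj
  -- every arrow is a periodic point of σ
  have hper : ∀ α : G.A, α ∈ Function.periodicPts σ := by
    intro α
    have hni : ¬ Function.Injective (fun n : Fin (Fintype.card G.A + 1) => σ^[(n : ℕ)] α) := by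
      intro hi
      have := Fintype.card_le_of_injective _ hi
      simp at this
    rw [Function.not_injective_iff] at hni
    obtain ⟨m, n, hmn, hne⟩ := hni
    rcases hne.lt_or_gt with hlt | hlt
    · refine Function.mk_mem_periodicPts (n := (n : ℕ) - (m : ℕ)) (by omega) ?_
      have : σ^[(m : ℕ)] (σ^[(n : ℕ) - (m : ℕ)] α) = σ^[(m : ℕ)] α := by
        rw [← Function.iterate_add_apply]
        rw [show (m : ℕ) + ((n : ℕ) - (m : ℕ)) = (n : ℕ) by omega]
        exact hmn.symm
      exact hinj.iterate (m : ℕ) this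
    · refine Function.mk_mem_periodicPts (n := (m : ℕ) - (n : ℕ)) (by omega) ?_
      have : σ^[(n : ℕ)] (σ^[(m : ℕ) - (n : ℕ)] α) = σ^[(n : ℕ)] α := by
        rw [← Function.iterate_add_apply]
        rw [show (n : ℕ) + ((m : ℕ) - (n : ℕ)) = (m : ℕ) by omega]
        exact hmn
      exact hinj.iterate (n : ℕ) this
  have hppos : ∀ α : G.A, 0 < Function.minimalPeriod σ α := fun α =>
    Function.minimalPeriod_pos_of_mem_periodicPts (hper α)
  -- the canonical cycle
  set L : G.A → List G.A :=
    fun α => List.ofFn (fun i : Fin (Function.minimalPeriod σ α) => σ^[(i : ℕ)] α) with hLdef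
  have hLlen : ∀ α, (L α).length = Function.minimalPeriod σ α := fun α => by
    simp [hLdef]
  have hLget : ∀ α (i : Fin (L α).length), (L α).get i = σ^[(i : ℕ)] α := by
    intro α i
    simp [hLdef, List.get_ofFn]
  have hLgetE : ∀ α (n : ℕ) (h : n < (L α).length), (L α)[n] = σ^[n] α := by
    intro α n h
    have := hLget α ⟨n, h⟩
    simpa using this
  have hLne : ∀ α, L α ≠ [] := by
    intro α h
    have := hLlen α
    rw [h] at this
    exact absurd this.symm (by simpa using (hppos α).ne')
  have hLhead : ∀ α, (L α).head? = some α := by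
    intro α
    rw [List.head?_eq_head (hLne α), List.head_eq_getElem_zero (hLne α)]
    have h0 : 0 < (L α).length := by rw [hLlen]; exact hppos α
    have := hLget α ⟨0, h0⟩
    simpa using this
  have hLlast : ∀ α, (L α).getLast? = some (σ^[Function.minimalPeriod σ α - 1] α) := by
    intro α
    rw [List.getLast?_eq_getLast_of_ne_nil (hLne α), List.getLast_eq_getElem]
    have h1 : (L α).length - 1 < (L α).length := by
      rw [hLlen]; have := hppos α; omega
    have := hLget α ⟨(L α).length - 1, h1⟩
    simp only [List.get_eq_getElem] at this
    rw [this, hLlen]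
  have hLcyc : ∀ α, G.IsPermCycle (L α) := by
    intro α
    refine ⟨⟨hLne α, ?_, ?_⟩, ?_⟩
    · rw [hLdef]
      exact List.nodup_ofFn_ofInjective (fun i j hij => by
        have := Function.iterate_injOn_Iio_minimalPeriod (f := σ) (x := α)
          (Set.mem_Iio.2 i.isLt) (Set.mem_Iio.2 j.isLt) hij
        exact Fin.ext this)
    · unfold List.Chain'; rw [List.isChain_iff_getElem]
      intro i hi
      have h1 := hLget α ⟨i, by omega⟩
      have h2 := hLget α ⟨i + 1, by omega⟩
      simp only [List.get_eq_getElem] at h1 h2 ⊢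
      rw [h1, h2, Function.iterate_succ_apply']
      exact ⟨(hσ _).1, (hσ _).2⟩
    · intro a ha b hb
      rw [hLhead α] at ha
      rw [hLlast α] at hb
      simp only [Option.mem_some_iff] at ha hb
      subst ha; subst hb
      have hiter : σ (σ^[Function.minimalPeriod σ α - 1] α) = α := by
        rw [show σ (σ^[Function.minimalPeriod σ α - 1] α)
              = σ^[Function.minimalPeriod σ α - 1 + 1] α from
            (Function.iterate_succ_apply' σ _ α).symm,
          show Function.minimalPeriod σ α - 1 + 1 = Function.minimalPeriod σ α from by
            have := hppos α; omega]
        exact Function.iterate_minimalPeriod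
      constructor
      · have h1 := (hσ (σ^[Function.minimalPeriod σ α - 1] α)).1
        rw [hiter] at h1
        exact h1
      · have h2 := (hσ (σ^[Function.minimalPeriod σ α - 1] α)).2
        rw [hiter] at h2
        exact h2
  -- uniqueness of the permitted cycle starting at α
  have huniq : ∀ α, ∀ l : List G.A, G.IsPermCycle l → l.head? = some α → l = L α := by
    intro α l hl hhead
    obtain ⟨⟨hne, hnd, hch⟩, hclose⟩ := hl
    have hlen0 : 0 < l.length := List.length_pos_iff.2 hne
    -- every entry is an iterate of α
    have hget : ∀ i (h : i < l.length), l.get ⟨i, h⟩ = σ^[i] α := by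
      intro i
      induction i with
      | zero =>
        intro h
        rw [List.head?_eq_head hne] at hhead
        simp only [Option.some_inj] at hhead
        rw [← hhead, List.head_eq_getElem_zero hne]
        simp
      | succ i ih =>
        intro h
        have hstep := List.isChain_iff_getElem.1 hch i (by omega)
        have h1 := ih (by omega)
        rw [List.get_eq_getElem] at h1; rw [h1] at hstep
        have := hu _ _ hstep.1 hstep.2
        simp only [List.get_eq_getElem] at this ⊢
        rw [this, Function.iterate_succ_apply']
    -- the length is a period
    have hlast : l.getLast? = some (σ^[l.length - 1] α) := by
      rw [List.getLast?_eq_getLast_of_ne_nil hne, List.getLast_eq_getElem]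
      have := hget (l.length - 1) (by omega)
      simpa using this
    have hclose' := hclose α (by rw [hhead]; rfl) _ (by rw [hlast]; rfl)
    have hperiod : Function.IsPeriodicPt σ l.length α := by
      have := hu _ _ hclose'.1 hclose'.2
      show σ^[l.length] α = α
      rw [show l.length = l.length - 1 + 1 from by omega, Function.iterate_succ_apply', ← this]
    have hdvd : Function.minimalPeriod σ α ∣ l.length :=
      Function.IsPeriodicPt.minimalPeriod_dvd hperiod
    have hle : l.length ≤ Function.minimalPeriod σ α := by
      by_contra hgt
      push_neg at hgt
      have hp := hppos α
      have h0 : (0 : ℕ) < l.length := hlen0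
      have hplt : Function.minimalPeriod σ α < l.length := hgt
      have he : l.get ⟨Function.minimalPeriod σ α, hplt⟩ = l.get ⟨0, h0⟩ := by
        rw [hget _ hplt, hget 0 h0]
        simpa using Function.iterate_minimalPeriod (f := σ) (x := α)
      have := (List.Nodup.get_inj_iff hnd).1 he
      simp only [Fin.mk.injEq] at this
      omega
    have hlen : l.length = Function.minimalPeriod σ α :=
      le_antisymm hle (Nat.le_of_dvd hlen0 hdvd)
    refine List.ext_get (by rw [hLlen, hlen]) ?_
    intro n h1 h2
    rw [hget n h1, hLget α ⟨n, h2⟩]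
  -- the orbit lemma for the quotient by σ
  have horb : ∀ (m : ℕ) (a : G.A),
      Quot.mk (fun a b : G.A => σ a = b) (σ^[m] a) = Quot.mk _ a := by
    intro m a
    induction m with
    | zero => rfl
    | succ m ih =>
      rw [Function.iterate_succ_apply', ← ih]
      exact (@Quot.sound G.A (fun a b : G.A => σ a = b) (σ^[m] a) (σ (σ^[m] a)) rfl).symm
  -- the key rotation identity
  have hrot1 : ∀ a : G.A, L (σ a) = (L a).rotate 1 := by
    intro a
    have hpa : Function.minimalPeriod σ (σ a) = Function.minimalPeriod σ a :=
      Function.minimalPeriod_apply (hper a)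
    refine List.ext_get (by rw [hLlen, List.length_rotate, hLlen, hpa]) ?_
    intro n h1 h2
    have h3 : (n + 1) % (L a).length < (L a).length :=
      Nat.mod_lt _ (by rw [hLlen]; exact hppos a)
    have e1 : (L (σ a))[n]'h1 = σ^[n] (σ a) := hLgetE (σ a) n h1
    have e2 := List.getElem_rotate (L a) 1 n h2
    have e3 : (L a)[(n + 1) % (L a).length]'h3 = σ^[(n + 1) % (L a).length] a :=
      hLgetE a _ h3
    simp only [List.get_eq_getElem]
    rw [e1, e2, e3]
    conv_rhs => rw [hLlen a]
    rw [Function.iterate_mod_minimalPeriod_eq, Function.iterate_succ_apply]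
  refine ⟨hbij, fun α => ⟨hLcyc α, fun l hl hh => huniq α l hl hh⟩, ?_⟩
  -- the bijection between permitted cycles up to rotation and σ-orbits
  let r₁ : {l : List G.A // G.IsPermCycle l} → {l : List G.A // G.IsPermCycle l} → Prop :=
    fun l l' => ∃ k, l'.1 = l.1.rotate k
  let r₂ : G.A → G.A → Prop := fun a b => σ a = b
  -- forward map: take head of the cycle
  have hhead_orbit : ∀ (l l' : {l : List G.A // G.IsPermCycle l}), r₁ l l' →
      Quot.mk r₂ (l.1.head l.2.1.1) = Quot.mk r₂ (l'.1.head l'.2.1.1) := by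
    rintro ⟨l, hl⟩ ⟨l', hl'⟩ ⟨k, hk⟩
    simp only at hk ⊢
    subst hk
    set a := l.head hl.1.1 with ha
    have hla : l = L a := huniq a l hl (List.head?_eq_head hl.1.1)
    have hlen : 0 < l.length := List.length_pos_iff.2 hl.1.1
    have hmod : (0 + k) % l.length < l.length := Nat.mod_lt _ hlen
    have h0 : 0 < (l.rotate k).length := by simpa using hlen
    have e2 := List.getElem_rotate l k 0 h0
    have e3 := List.getElem_of_eq hla hmod
    have e4 := hLgetE a ((0 + k) % l.length) (by rw [← hla]; exact hmod)
    have hh : (l.rotate k).head hl'.1.1 = σ^[(0 + k) % l.length] a := by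
      rw [List.head_eq_getElem_zero hl'.1.1, e2, e3, e4]
    rw [hh]
    exact (horb _ a).symm
  -- backward map: take the canonical cycle
  have hLrot : ∀ (a b : G.A), r₂ a b →
      Quot.mk r₁ ⟨L a, hLcyc a⟩ = Quot.mk r₁ ⟨L b, hLcyc b⟩ := by
    intro a b hab
    refine Quot.sound ⟨1, ?_⟩
    simp only
    rw [← hab]
    exact hrot1 a
  refine ⟨⟨Quot.lift (fun l => Quot.mk r₂ (l.1.head l.2.1.1)) hhead_orbit,
    Quot.lift (fun a => Quot.mk r₁ ⟨L a, hLcyc a⟩) hLrot, ?_, ?_⟩⟩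
  · -- left inverse
    intro x
    induction x using Quot.ind with
    | _ l =>
    show Quot.mk r₁ ⟨L (l.1.head l.2.1.1), hLcyc _⟩ = Quot.mk r₁ l
    have : l.1 = L (l.1.head l.2.1.1) :=
      huniq _ l.1 l.2 (List.head?_eq_head l.2.1.1)
    congr 1
    exact Subtype.ext this.symm
  · -- right inverse
    intro x
    induction x using Quot.ind with
    | _ a =>
    show Quot.mk r₂ ((L a).head (hLcyc a).1.1) = Quot.mk r₂ a
    have : (L a).head (hLcyc a).1.1 = a := by
      have := hLhead a
      rw [List.head?_eq_head (hLcyc a).1.1] at this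
      exact Option.some_inj.1 this
    rw [this]
end

section
/- Let (Q,I) be a connected gentle quiver in which every vertex is a transition vertex or a crossing vertex, and suppose some transition vertex j has AG-invariant (m(j), n(j)) with m(j) = n(j). Then every vertex of Q is a transition vertex; consequently no composable pair of arrows lies in I and Q is a single cyclically oriented cycle (every vertex has exactly one incoming and exactly one outgoing arrow). -/
namespace GentleQuiver

variable {G : GentleQuiver}

/-- At a transition vertex, no arrow forbidden-precedes an outgoing arrow. -/
lemma no_fstep_into {v : G.V} (hv : G.IsTransition v) {b : G.A} (hb : G.s b = v) :
    ∀ c : G.A, ¬ G.FStep c b := by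
  obtain ⟨α, β, hα, hβ, huα, huβ, hrel⟩ := hv
  rintro c ⟨h1, h2⟩
  have hc : c = α := huα c (by rw [← h1, hb])
  have hbβ : b = β := huβ b hb
  subst hc hbβ
  exact hrel h2

/-- Any arrow into a crossing vertex has a forbidden continuation. -/
lemma crossing_fstep {w : G.V} (hw : G.IsCrossing w) {b : G.A} (hb : G.t b = w) :
    ∃ c : G.A, G.FStep b c := by
  obtain ⟨α₁, α₂, β₁, β₂, _, _, h1, h2, h3, h4, hin, _, r11, r22, _, _⟩ := hw
  rcases hin b hb with rfl | rfl
  · exact ⟨β₁, by rw [h3, hb], r11⟩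
  · exact ⟨β₂, by rw [h4, hb], r22⟩

/-- A forbidden continuation of the last arrow of a suitable forbidden path is new. -/
lemma ext_not_mem {l : List G.A} (hne : l ≠ []) (hnd : l.Nodup) (hch : l.Chain' G.FStep)
    {b₀ : G.A} (hhd : l.head? = some b₀) (hst : ∀ c : G.A, ¬ G.FStep c b₀)
    {b c : G.A} (hb : b ∈ l.getLast?) (hbc : G.FStep b c) : c ∉ l := by
  intro hcl
  obtain ⟨i, hi⟩ := List.mem_iff_get.mp hcl
  have hbl : b = l.getLast hne := by
    obtain ⟨_, h⟩ := List.mem_getLast?_eq_getLast hb; exact h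
  have hlast : b = l.get ⟨l.length - 1, by have := List.length_pos_iff.mpr hne; omega⟩ := by
    rw [hbl, List.getLast_eq_getElem]; rfl
  rcases Nat.eq_zero_or_pos i.val with h0 | hpos
  · -- c is the head, contradiction with hst
    have : l.get i = b₀ := by
      have : l.head? = some (l.get i) := by
        cases l with
        | nil => exact absurd rfl hne
        | cons a t =>
          have : i = (⟨0, by simp⟩ : Fin (a :: t).length) := Fin.ext h0
          subst this; rfl
      rw [hhd] at this; exact (Option.some.injEq _ _).mp this.symm
    rw [hi] at this; subst this
    exact hst b hbc
  · obtain ⟨m, hm⟩ : ∃ m, i.val = m + 1 := ⟨i.val - 1, by omega⟩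
    have him : m + 1 < l.length := hm ▸ i.isLt
    have hchain : G.FStep (l.get ⟨m, by omega⟩) (l.get ⟨m + 1, by omega⟩) :=
      List.isChain_iff_getElem.mp hch m (by omega)
    have hig : l.get i = l.get ⟨m + 1, him⟩ := by congr 1; exact Fin.ext hm
    rw [hig] at hi
    -- rel c (l.get m) and rel c b; pred_rel_unique
    have h1 : G.t (l.get ⟨m, by omega⟩) = G.s c := by rw [← hi]; exact hchain.1.symm
    have h2 : G.t b = G.s c := hbc.1.symm
    have heq : l.get ⟨m, by omega⟩ = b :=
      G.pred_rel_unique c _ _ h1 h2 (hi ▸ hchain.2) hbc.2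
    rw [hlast] at heq
    have := congrArg Fin.val ((hnd.get_inj_iff).mp heq)
    simp only [] at this
    omega

end GentleQuiver
namespace GentleQuiver

variable {G : GentleQuiver}

/-- Extend a forbidden path to a right-maximal one. -/
lemma extend_max (k : ℕ) : ∀ (l : List G.A), l ≠ [] → l.Nodup → l.Chain' G.FStep →
    ∀ {b₀ : G.A}, l.head? = some b₀ → (∀ c : G.A, ¬ G.FStep c b₀) →
    Fintype.card G.A ≤ l.length + k →
    ∃ l' : List G.A, l' ≠ [] ∧ l'.Nodup ∧ l'.Chain' G.FStep ∧ l'.head? = some b₀ ∧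
      (∀ b ∈ l'.getLast?, ∀ c : G.A, ¬ G.FStep b c) := by
  induction k with
  | zero =>
    intro l hne hnd hch b₀ hhd hst hcard
    refine ⟨l, hne, hnd, hch, hhd, ?_⟩
    intro b hb c hbc
    have hnot := ext_not_mem hne hnd hch hhd hst hb hbc
    -- l has length = card A, and c ∉ l : contradiction since l ++ [c] nodup
    have : (l ++ [c]).Nodup := by
      rw [List.nodup_append]
      exact ⟨hnd, List.nodup_singleton c, by simp; exact fun a ha h => hnot (h ▸ ha)⟩
    have hle := this.length_le_card
    simp at hle
    omega
  | succ k ih =>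
    intro l hne hnd hch b₀ hhd hst hcard
    by_cases hex : ∃ c : G.A, ∀ b ∈ l.getLast?, G.FStep b c
    · obtain ⟨c, hc⟩ := hex
      have hbl : l.getLast hne ∈ l.getLast? := by
        rw [List.getLast?_eq_getLast_of_ne_nil hne]; rfl
      have hbc := hc _ hbl
      have hnot := ext_not_mem hne hnd hch hhd hst hbl hbc
      have hne' : l ++ [c] ≠ [] := by simp
      have hnd' : (l ++ [c]).Nodup := by
        rw [List.nodup_append]
        exact ⟨hnd, List.nodup_singleton c, by simp; exact fun a ha h => hnot (h ▸ ha)⟩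
      have hch' : (l ++ [c]).Chain' G.FStep := by
        show List.IsChain G.FStep (l ++ [c])
        rw [List.isChain_append]
        refine ⟨hch, List.isChain_singleton c, ?_⟩
        intro x hx y hy
        simp at hy; subst hy
        have : x = l.getLast hne := by
          obtain ⟨_, h⟩ := List.mem_getLast?_eq_getLast hx; exact h
        subst this; exact hbc
      have hhd' : (l ++ [c]).head? = some b₀ := by
        rw [List.head?_append_of_ne_nil _ hne]; exact hhd
      have hcard' : Fintype.card G.A ≤ (l ++ [c]).length + k := by
        simp; omega
      exact ih _ hne' hnd' hch' hhd' hst hcard'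
    · push_neg at hex
      refine ⟨l, hne, hnd, hch, hhd, ?_⟩
      intro b hb c hbc
      obtain ⟨b', hb', hnb⟩ := hex c
      have hbb : b = b' := by
        have h2 : (some b : Option G.A) = some b' := hb.symm.trans hb'
        exact Option.some_injective _ h2
      subst hbb; exact hnb hbc

/-- Every transition vertex is the source of a forbidden thread. -/
lemma thread_exists {v : G.V} (hv : G.IsTransition v) :
    ∃ l : List G.A, G.IsForbThread l ∧ G.StartsAt l v := by
  obtain ⟨α, β, hα, hβ, huα, huβ, hrel⟩ := hv
  have hst : ∀ c : G.A, ¬ G.FStep c β := no_fstep_into ⟨α, β, hα, hβ, huα, huβ, hrel⟩ hβ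
  obtain ⟨l, hne, hnd, hch, hhd, hmax⟩ :=
    extend_max (Fintype.card G.A) [β] (by simp) (List.nodup_singleton β)
      (List.isChain_singleton β) rfl hst (by simp)
  refine ⟨l, ⟨⟨hne, hnd, hch⟩, ?_, hmax, ?_⟩, ?_⟩
  · rintro ⟨_, hcyc⟩
    have : β ∈ l.head? := by rw [hhd]; rfl
    have hbl : l.getLast hne ∈ l.getLast? := by
      rw [List.getLast?_eq_getLast_of_ne_nil hne]; rfl
    exact hmax _ hbl β (hcyc β this _ hbl)
  · intro a ha c hc
    have : a = β := by rw [hhd] at ha; exact ((Option.mem_some_iff).mp ha).symm ▸ rfl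
    subst this; exact hst c hc
  · intro a ha
    have : a = β := by rw [hhd] at ha; exact ((Option.mem_some_iff).mp ha).symm ▸ rfl
    subst this; exact hβ

end GentleQuiver

/-- let `(Q, I)` be a connected gentle quiver in which every vertex is a
transition or crossing vertex, and suppose some transition vertex `j` has AG-invariant
`(m(j), n(j))` with `m(j) = n(j)` (where `κ`, `len`, `n` are as in the definition of the
AG-invariant and `m(j) = Σ_{p<n} len(κᵖ(j))`).  Then every vertex of `Q` is a transition
vertex; consequently no composable pair of arrows lies in `I`, and every vertex has
exactly one incoming and exactly one outgoing arrow (`Q` is a single oriented cycle). -/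
theorem stmt9 (G : GentleQuiver)
    (hconn : ∀ v w : G.V, Relation.ReflTransGen
      (fun x y : G.V => ∃ α : G.A, (G.s α = x ∧ G.t α = y) ∨ (G.s α = y ∧ G.t α = x)) v w)
    (hG : ∀ v : G.V, G.IsTransition v ∨ G.IsCrossing v)
    (j : G.V) (hj : G.IsTransition j)
    (κ : G.V → G.V)
    (hκ : ∀ v : G.V, G.IsTransition v → ∀ l : List G.A,
      G.IsForbThread l → G.StartsAt l v → G.EndsAt l (κ v))
    (len : G.V → ℕ)
    (hlen : ∀ v : G.V, G.IsTransition v → ∀ l : List G.A,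
      G.IsForbThread l → G.StartsAt l v → l.length = len v)
    (n : ℕ) (hn : 0 < n) (hfix : κ^[n] j = j)
    (hmin : ∀ q : ℕ, 0 < q → κ^[q] j = j → n ≤ q)
    (hm : ∑ p ∈ Finset.range n, len (κ^[p] j) = n) :
    (∀ v : G.V, G.IsTransition v) ∧
    (∀ β α : G.A, ¬ G.rel β α) ∧
    (∀ v : G.V, (∃! α : G.A, G.t α = v) ∧ (∃! β : G.A, G.s β = v)) := by
  -- every iterate of κ starting at j is a transition vertex
  have htrans : ∀ p : ℕ, G.IsTransition (κ^[p] j) := by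
    intro p
    induction p with
    | zero => exact hj
    | succ p ih =>
      obtain ⟨l, hl, hstart⟩ := GentleQuiver.thread_exists ih
      have hend := hκ _ ih l hl hstart
      rw [Function.iterate_succ_apply']
      rcases hG (κ (κ^[p] j)) with h | h
      · exact h
      · exfalso
        have hne := hl.1.1
        have hbl : l.getLast hne ∈ l.getLast? := by
          rw [List.getLast?_eq_getLast_of_ne_nil hne]; rfl
        have ht : G.t (l.getLast hne) = κ (κ^[p] j) := hend _ hbl
        obtain ⟨c, hc⟩ := GentleQuiver.crossing_fstep h ht
        exact hl.2.2.1 _ hbl c hc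
  -- each len at an iterate is ≥ 1
  have hge : ∀ p : ℕ, 1 ≤ len (κ^[p] j) := by
    intro p
    obtain ⟨l, hl, hstart⟩ := GentleQuiver.thread_exists (htrans p)
    have := hlen _ (htrans p) l hl hstart
    rw [← this]
    exact List.length_pos_iff.mpr hl.1.1
  -- hence each len at an iterate below n equals 1
  have hone : ∀ p ∈ Finset.range n, len (κ^[p] j) = 1 := by
    by_contra hcon
    push_neg at hcon
    obtain ⟨p, hp, hp1⟩ := hcon
    have h2 : 2 ≤ len (κ^[p] j) := by
      have := hge p; omega
    have : (∑ q ∈ Finset.range n, 1) < ∑ q ∈ Finset.range n, len (κ^[q] j) :=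
      Finset.sum_lt_sum (fun i _ => hge i) ⟨p, hp, by omega⟩
    simp [hm] at this
  -- periodicity
  have hper : ∀ p : ℕ, κ^[p + n] j = κ^[p] j := by
    intro p
    rw [Function.iterate_add_apply, hfix]
  have hmod : ∀ p : ℕ, κ^[p] j = κ^[p % n] j := by
    intro p
    conv_lhs => rw [← Nat.mod_add_div p n]
    rw [Function.iterate_add_apply, Function.iterate_mul, Function.iterate_fixed hfix]
  have hone' : ∀ p : ℕ, len (κ^[p] j) = 1 := by
    intro p
    rw [hmod p]
    exact hone _ (Finset.mem_range.mpr (Nat.mod_lt _ hn))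
  -- single-arrow step between consecutive iterates
  have hstep : ∀ p : ℕ, ∃ b : G.A, G.s b = κ^[p] j ∧ G.t b = κ^[p + 1] j := by
    intro p
    obtain ⟨l, hl, hstart⟩ := GentleQuiver.thread_exists (htrans p)
    have hlen1 : l.length = 1 := (hlen _ (htrans p) l hl hstart).trans (hone' p)
    obtain ⟨b, rfl⟩ := List.length_eq_one_iff.mp hlen1
    have hend := hκ _ (htrans p) [b] hl hstart
    refine ⟨b, hstart b rfl, ?_⟩
    rw [Function.iterate_succ_apply']
    exact hend b rfl
  -- the orbit of j is closed under arrows in both directions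
  have hout : ∀ (p : ℕ) (a : G.A), G.s a = κ^[p] j → ∃ q, κ^[q] j = G.t a := by
    intro p a ha
    obtain ⟨b, hb1, hb2⟩ := hstep p
    obtain ⟨α, β, _, hβ, _, huβ, _⟩ := htrans p
    have : a = β := huβ a ha
    have : a = b := this.trans (huβ b hb1).symm
    exact ⟨p + 1, by rw [← hb2, this]⟩
  have hin : ∀ (p : ℕ) (a : G.A), G.t a = κ^[p] j → ∃ q, κ^[q] j = G.s a := by
    intro p a ha
    obtain ⟨b, hb1, hb2⟩ := hstep (p + n - 1)
    have hpn : p + n - 1 + 1 = p + n := by omega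
    have hb2' : G.t b = κ^[p] j := by rw [hb2, hpn, hper]
    obtain ⟨α, β, hα, _, huα, _, _⟩ := htrans p
    have : a = α := huα a ha
    have : a = b := this.trans (huα b hb2').symm
    exact ⟨p + n - 1, by rw [← hb1, this]⟩
  -- every vertex lies in the orbit
  have horb : ∀ v : G.V, ∃ p, κ^[p] j = v := by
    intro v
    have h := hconn j v
    induction h with
    | refl => exact ⟨0, rfl⟩
    | tail hxy e ih =>
      obtain ⟨p, hp⟩ := ih
      obtain ⟨a, ⟨h1, h2⟩ | ⟨h1, h2⟩⟩ := e
      · obtain ⟨q, hq⟩ := hout p a (by rw [h1, hp])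
        exact ⟨q, by rw [hq, h2]⟩
      · obtain ⟨q, hq⟩ := hin p a (by rw [h2, hp])
        exact ⟨q, by rw [hq, h1]⟩
  have hallT : ∀ v : G.V, G.IsTransition v := by
    intro v
    obtain ⟨p, hp⟩ := horb v
    exact hp ▸ htrans p
  refine ⟨hallT, ?_, ?_⟩
  · intro b a hba
    obtain ⟨α, β, hα, hβ, huα, huβ, hrel⟩ := hallT (G.s b)
    have ha : a = α := huα a (G.rel_comp b a hba).symm
    have hb : b = β := huβ b rfl
    exact hrel (hb ▸ ha ▸ hba)
  · intro v
    obtain ⟨α, β, hα, hβ, huα, huβ, _⟩ := hallT v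
    exact ⟨⟨α, hα, huα⟩, ⟨β, hβ, huβ⟩⟩
end

section
/- Let Γ = (V, E, μ) be a truncated graph with incidence matrix B_Γ ∈ Mat_{E×V}(ℤ). Then the kernel of the ℤ-linear map ℤ^V → ℤ^E, x ↦ B_Γ x, is a free abelian group of rank bc(Γ), where bc(Γ) is the number of connected components of Γ that are bipartite without truncated edges. In particular, the rank of B_Γ equals |V| − bc(Γ). -/
/-- A truncated graph `Γ = (V, E, μ)`: finite sets of vertices `V` and edges `E`
together with a multiplicity map `μ : E → V → ℕ` such that every edge has total
multiplicity `1` (a truncated edge) or `2` (an ordinary edge or a loop). -/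
structure TruncGraph (V E : Type) [Fintype V] where
  /-- multiplicity of a vertex in an edge -/
  μ : E → V → ℕ
  total_deg : ∀ e : E, (∑ v, μ e v) = 1 ∨ (∑ v, μ e v) = 2

namespace TruncGraph

variable {V E : Type} [Fintype V] [Fintype E] (Γ : TruncGraph V E)

/-- An edge `e` is incident to a vertex `v` if `μ e v ≠ 0`. -/
def Incid (e : E) (v : V) : Prop := Γ.μ e v ≠ 0

/-- A loop: an edge with multiplicity `2` at some vertex. -/
def IsLoop (e : E) : Prop := ∃ v : V, Γ.μ e v = 2

/-- A truncated edge: total multiplicity `1`. -/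
def IsTrunc (e : E) : Prop := (∑ v, Γ.μ e v) = 1

/-- An ordinary edge: neither a loop nor a truncated edge
(equivalently, incident to exactly two distinct vertices with multiplicity one each). -/
def IsOrd (e : E) : Prop := ¬ Γ.IsLoop e ∧ ¬ Γ.IsTrunc e

/-- Two vertices are adjacent if some edge is incident to both. -/
def Adj (v w : V) : Prop := ∃ e : E, Γ.Incid e v ∧ Γ.Incid e w

/-- Connectivity: the reflexive-transitive closure of adjacency. -/
def Conn (v w : V) : Prop := Relation.ReflTransGen Γ.Adj v w

/-- `Γ` is connected. -/
def IsConnected : Prop := ∀ v w : V, Γ.Conn v w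

/-- The edge `e` joins the vertices `a` and `b` (for a loop, `a = b`;
truncated edges join no pair of vertices). -/
def Joins (e : E) (a b : V) : Prop :=
  Γ.Incid e a ∧ Γ.Incid e b ∧ (a = b → Γ.μ e a = 2)

/-- `Γ` contains a cycle of odd length: a closed walk with an odd number of pairwise
distinct non-truncated edges (a loop counts as a cycle of length `1`). -/
def HasOddCycle : Prop :=
  ∃ ℓ : ℕ, Odd ℓ ∧ ∃ (v : ℕ → V) (e : ℕ → E), v 0 = v ℓ ∧
    (∀ i j : ℕ, i < ℓ → j < ℓ → e i = e j → i = j) ∧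
    ∀ i : ℕ, i < ℓ → Γ.Joins (e i) (v i) (v (i + 1))

/-- The edge-vertex incidence matrix `B_Γ ∈ Mat_{E×V}(ℤ)`. -/
def B : Matrix E V ℤ := fun e v => (Γ.μ e v : ℤ)

/-- Connectivity through ordinary edges only. -/
def ConnOrd (v w : V) : Prop :=
  Relation.ReflTransGen (fun x y : V => ∃ e : E, Γ.IsOrd e ∧ Γ.Incid e x ∧ Γ.Incid e y) v w

/-- `Γ` is a tree with a unique truncated edge: connected, no loops, exactly one
truncated edge, and the ordinary edges form a tree on `V` (they connect `V` and number
`|V| − 1`); in particular `|E| = |V|`. -/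
def IsTreeWithUniqueTruncEdge : Prop :=
  Γ.IsConnected ∧ (∀ e : E, ¬ Γ.IsLoop e) ∧ (∃! e : E, Γ.IsTrunc e) ∧
    (∀ v w : V, Γ.ConnOrd v w) ∧
    Nat.card {e : E // Γ.IsOrd e} + 1 = Fintype.card V

/-- `Γ` is a tree without truncated edges: connected, no loops, no truncated edges,
and `|E| = |V| − 1`. -/
def IsTreeNoTruncEdge : Prop :=
  Γ.IsConnected ∧ (∀ e : E, ¬ Γ.IsLoop e) ∧ (∀ e : E, ¬ Γ.IsTrunc e) ∧
    Fintype.card E + 1 = Fintype.card V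

/-- `Γ` is bipartite without truncated edges: it has no loops and no truncated edges,
and admits a `2`-coloring of its vertices such that every edge is incident to vertices
of both colors. -/
def IsBipartiteNoTrunc : Prop :=
  (∀ e : E, ¬ Γ.IsLoop e) ∧ (∀ e : E, ¬ Γ.IsTrunc e) ∧
    ∃ c : V → Bool, ∀ (e : E) (v w : V), Γ.Incid e v → Γ.Incid e w → v ≠ w → c v ≠ c w

/-- The component of `v` is bipartite without truncated edges: no loop or truncated edge
is incident to a vertex of the component of `v`, and there is a `2`-coloring of the
vertices such that every edge of the component joins vertices of different colors. -/
def GoodCompAt (v : V) : Prop :=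
  (∀ (e : E) (w : V), Γ.Conn v w → Γ.Incid e w → ¬ Γ.IsLoop e ∧ ¬ Γ.IsTrunc e) ∧
    ∃ c : V → Bool, ∀ (e : E) (w w' : V),
      Γ.Conn v w → Γ.Incid e w → Γ.Incid e w' → w ≠ w' → c w ≠ c w'

/-- `bc(Γ)`: the number of connected components of `Γ` which are bipartite without
truncated edges (components are realized as classes of the quotient of `V` by the
equivalence relation generated by adjacency). -/
noncomputable def bc : ℕ :=
  Set.ncard {q : Quot Γ.Adj | ∃ v : V, q = Quot.mk Γ.Adj v ∧ Γ.GoodCompAt v}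

end TruncGraph

namespace TruncGraph

variable {V E : Type} [Fintype V] [Fintype E] [DecidableEq V] (Γ : TruncGraph V E)

set_option linter.unusedSectionVars false

lemma adj_symm : Symmetric Γ.Adj := fun _ _ ⟨e, h1, h2⟩ => ⟨e, h2, h1⟩

lemma conn_of_eqvGen {v w : V} (h : Relation.EqvGen Γ.Adj v w) : Γ.Conn v w := by
  induction h with
  | rel a b h => exact Relation.ReflTransGen.single h
  | refl a => exact Relation.ReflTransGen.refl
  | symm a b _ ih => haveI : Std.Symm Γ.Adj := ⟨fun a b h => Γ.adj_symm h⟩; exact (Relation.ReflTransGen.symmetric (r := Γ.Adj)).symm _ _ ih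
  | trans a b c _ _ ih1 ih2 => exact ih1.trans ih2

lemma conn_of_quot_eq {v w : V} (h : Quot.mk Γ.Adj v = Quot.mk Γ.Adj w) : Γ.Conn v w :=
  Γ.conn_of_eqvGen (Quot.eq.mp h)

lemma single_le (e : E) (w : V) : Γ.μ e w ≤ ∑ v, Γ.μ e v :=
  Finset.single_le_sum (fun v _ => Nat.zero_le _) (Finset.mem_univ w)

lemma pair_le (e : E) {v w : V} (h : v ≠ w) : Γ.μ e v + Γ.μ e w ≤ ∑ u, Γ.μ e u := by
  have h1 : ∑ u ∈ ({v, w} : Finset V), Γ.μ e u ≤ ∑ u, Γ.μ e u :=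
    Finset.sum_le_sum_of_subset (Finset.subset_univ _)
  rwa [Finset.sum_pair h] at h1

lemma total_le (e : E) : ∑ v, Γ.μ e v ≤ 2 := by
  rcases Γ.total_deg e with h | h <;> omega

lemma exists_incid (e : E) : ∃ w, Γ.μ e w ≠ 0 := by
  by_contra h
  push_neg at h
  have h0 : ∑ v, Γ.μ e v = 0 := Finset.sum_eq_zero (fun v _ => h v)
  rcases Γ.total_deg e with h2 | h2 <;> omega

lemma trunc_struct {e : E} (h : Γ.IsTrunc e) :
    ∃ w, Γ.μ e w = 1 ∧ ∀ v, v ≠ w → Γ.μ e v = 0 := by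
  obtain ⟨w, hw⟩ := Γ.exists_incid e
  have h1 := Γ.single_le e w
  rw [h] at h1
  refine ⟨w, by omega, fun v hv => ?_⟩
  have h2 := Γ.pair_le e hv
  rw [h] at h2
  omega

lemma loop_struct {e : E} {w : V} (hw : Γ.μ e w = 2) : ∀ v, v ≠ w → Γ.μ e v = 0 := by
  intro v hv
  have h2 := Γ.pair_le e hv
  have h3 := Γ.total_le e
  omega

lemma incid_two {e : E} {w w' : V} (hne : w ≠ w') (h1 : Γ.Incid e w) (h2 : Γ.Incid e w') :
    Γ.μ e w = 1 ∧ Γ.μ e w' = 1 ∧ ∀ v, v ≠ w → v ≠ w' → Γ.μ e v = 0 := by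
  have hp := Γ.pair_le e hne
  have ht := Γ.total_le e
  unfold Incid at h1 h2
  refine ⟨by omega, by omega, fun v hv hv' => ?_⟩
  have h3 : ∑ u ∈ ({w, w', v} : Finset V), Γ.μ e u ≤ ∑ u, Γ.μ e u :=
    Finset.sum_le_sum_of_subset (Finset.subset_univ _)
  rw [Finset.sum_insert (by simp [hne, Ne.symm hv]), Finset.sum_pair (Ne.symm hv')] at h3
  omega

lemma ord_struct {e : E} (hl : ¬ Γ.IsLoop e) (ht : ¬ Γ.IsTrunc e) :
    ∃ w w', w ≠ w' ∧ Γ.μ e w = 1 ∧ Γ.μ e w' = 1 ∧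
      ∀ v, v ≠ w → v ≠ w' → Γ.μ e v = 0 := by
  have h2 : ∑ v, Γ.μ e v = 2 := (Γ.total_deg e).resolve_left ht
  obtain ⟨w, hw⟩ := Γ.exists_incid e
  have hw2 : Γ.μ e w ≠ 2 := fun h => hl ⟨w, h⟩
  have hw1 : Γ.μ e w = 1 := by have := Γ.single_le e w; omega
  have hex : ∃ w', w' ≠ w ∧ Γ.μ e w' ≠ 0 := by
    by_contra h
    push_neg at h
    have := Finset.sum_eq_single (s := Finset.univ) (f := Γ.μ e) w
      (fun b _ hb => h b hb) (fun h => absurd (Finset.mem_univ w) h)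
    omega
  obtain ⟨w', hne, hw'⟩ := hex
  obtain ⟨a, b, c⟩ := Γ.incid_two (Ne.symm hne) hw hw'
  exact ⟨w, w', Ne.symm hne, a, b, c⟩

lemma mem_ker_iff {x : V → ℤ} :
    x ∈ LinearMap.ker (Matrix.mulVecLin Γ.B) ↔ ∀ e, ∑ v, (Γ.μ e v : ℤ) * x v = 0 := by
  simp only [LinearMap.mem_ker, Matrix.mulVecLin_apply, funext_iff, Matrix.mulVec,
    dotProduct, B, Pi.zero_apply]

variable {Γ}
variable {x : V → ℤ} (hx : ∀ e, ∑ v, (Γ.μ e v : ℤ) * x v = 0)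

include hx

lemma ker_single {e : E} {w : V} (hall : ∀ v, v ≠ w → Γ.μ e v = 0) :
    (Γ.μ e w : ℤ) * x w = 0 := by
  have h := hx e
  rwa [Finset.sum_eq_single w (fun b _ hb => by rw [hall b hb]; simp)
    (fun h => absurd (Finset.mem_univ w) h)] at h

lemma ker_pair {e : E} {w w' : V} (hne : w ≠ w') (h1 : Γ.Incid e w) (h2 : Γ.Incid e w') :
    x w + x w' = 0 := by
  obtain ⟨hw, hw', hall⟩ := Γ.incid_two hne h1 h2
  have h := hx e
  rw [← Finset.sum_subset (Finset.subset_univ ({w, w'} : Finset V))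
    (fun v _ hv => by
      simp only [Finset.mem_insert, Finset.mem_singleton, not_or] at hv
      rw [hall v hv.1 hv.2]; simp),
    Finset.sum_pair hne, hw, hw'] at h
  simpa using h

lemma conn_sign {v w : V} (h : Γ.Conn v w) : x w = x v ∨ x w = - x v := by
  induction h with
  | refl => left; rfl
  | @tail b c hconn hadj ih =>
    by_cases hbc : b = c
    · subst hbc; exact ih
    · obtain ⟨e, h1, h2⟩ := hadj
      have := ker_pair hx hbc h1 h2
      omega

lemma good_of_ne_zero {w : V} (hw : x w ≠ 0) : Γ.GoodCompAt w := by
  have key : ∀ u, Γ.Conn w u → x u ≠ 0 := by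
    intro u h
    rcases conn_sign hx h with h' | h' <;> omega
  constructor
  · intro e u hconn hincid
    have hu := key u hconn
    constructor
    · rintro ⟨z, hz⟩
      have hzu : z = u := by
        by_contra hne
        have hp := Γ.pair_le e hne
        have ht := Γ.total_le e
        unfold Incid at hincid
        omega
      subst hzu
      have := ker_single hx (Γ.loop_struct hz)
      rw [hz] at this
      omega
    · intro ht
      obtain ⟨z, hz1, hz2⟩ := Γ.trunc_struct ht
      have hzu : z = u := by
        by_contra hne
        exact hincid (hz2 u (fun h => hne h.symm))
      subst hzu
      have := ker_single hx (fun v hv => hz2 v hv)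
      rw [hz1] at this
      omega
  · refine ⟨fun u => decide (0 < x u), fun e u u' hconn h1 h2 hne => ?_⟩
    have hp := ker_pair hx hne h1 h2
    have hu := key u hconn
    simp only [ne_eq, decide_eq_decide]
    omega

lemma val_of_conn {v : V} (col : V → Bool)
    (hc : ∀ (e : E) (u u' : V), Γ.Conn v u → Γ.Incid e u → Γ.Incid e u' → u ≠ u' →
      col u ≠ col u')
    {w : V} (h : Γ.Conn v w) :
    x w = (if col w = col v then x v else - x v) := by
  induction h with
  | refl => simp
  | @tail b c' hconn hadj ih =>
    by_cases hbc : b = c'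
    · subst hbc; exact ih
    · obtain ⟨e, h1, h2⟩ := hadj
      have hsum := ker_pair hx hbc h1 h2
      have hcol : col b ≠ col c' := hc e b c' hconn h1 h2 hbc
      cases hb : col b <;> cases hb' : col c' <;> cases hv : col v <;>
        simp_all <;> omega

end TruncGraph



/-- for a truncated graph `Γ` with incidence matrix `B_Γ`, the kernel of
the `ℤ`-linear map `ℤ^V → ℤ^E`, `x ↦ B_Γ x`, is free of rank `bc(Γ)`, the number of
connected components of `Γ` which are bipartite without truncated edges.  In particular
the rank of `B_Γ` is `|V| − bc(Γ)`. -/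
theorem stmt10 {V E : Type} [Fintype V] [Fintype E] [DecidableEq V] [DecidableEq E]
    (Γ : TruncGraph V E) :
    Nonempty (LinearMap.ker (Matrix.mulVecLin Γ.B) ≃ₗ[ℤ] (Fin Γ.bc → ℤ)) ∧
      Γ.B.rank = Fintype.card V - Γ.bc := by
  classical
  set K := LinearMap.ker (Matrix.mulVecLin Γ.B) with hK
  set S : Set (Quot Γ.Adj) := {q | ∃ v, q = Quot.mk Γ.Adj v ∧ Γ.GoodCompAt v} with hSdef
  haveI : Finite (Quot Γ.Adj) := Quot.finite _
  haveI : Fintype S := Fintype.ofFinite S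
  have hbc : Γ.bc = Fintype.card S := by
    rw [TruncGraph.bc, ← hSdef, ← Nat.card_coe_set_eq, Nat.card_eq_fintype_card]
  have hrepex : ∀ q : S, ∃ v, q.1 = Quot.mk Γ.Adj v ∧ Γ.GoodCompAt v := fun q => q.2
  choose rep hrep1 hrep2 using hrepex
  have hcolex : ∀ q : S, ∃ col : V → Bool, ∀ (e : E) (w w' : V), Γ.Conn (rep q) w →
      Γ.Incid e w → Γ.Incid e w' → w ≠ w' → col w ≠ col w' := fun q => (hrep2 q).2
  choose col hcol using hcolex
  set sgn : S → V → ℤ := fun q w => if col q w = col q (rep q) then 1 else -1 with hsgn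
  have hconn_rep : ∀ (q : S) (w : V), Quot.mk Γ.Adj w = q.1 → Γ.Conn (rep q) w := by
    intro q w h
    exact Γ.conn_of_quot_eq ((hrep1 q).symm.trans h.symm)
  set Ffun : (S → ℤ) → (V → ℤ) := fun y w =>
    if h : Quot.mk Γ.Adj w ∈ S then sgn ⟨_, h⟩ w * y ⟨_, h⟩ else 0 with hFfun
  have hFapp : ∀ (y : S → ℤ) (w : V) (h : Quot.mk Γ.Adj w ∈ S),
      Ffun y w = sgn ⟨_, h⟩ w * y ⟨_, h⟩ := fun y w h => dif_pos h
  have hFapp0 : ∀ (y : S → ℤ) (w : V), Quot.mk Γ.Adj w ∉ S → Ffun y w = 0 :=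
    fun y w h => dif_neg h
  have hFker : ∀ y, Ffun y ∈ K := by
    intro y
    rw [hK, Γ.mem_ker_iff]
    intro e
    by_cases ht : Γ.IsTrunc e
    · obtain ⟨w, hw1, hw2⟩ := Γ.trunc_struct ht
      apply Finset.sum_eq_zero
      intro v _
      by_cases hv : v = w
      · subst hv
        have hzero : Ffun y v = 0 := by
          by_cases h : Quot.mk Γ.Adj v ∈ S
          · exact absurd ht ((hrep2 ⟨_, h⟩).1 e v (hconn_rep ⟨_, h⟩ v rfl)
              (by simp [TruncGraph.Incid, hw1])).2
          · exact hFapp0 y v h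
        rw [hzero, mul_zero]
      · rw [hw2 v hv]; simp
    · by_cases hl : Γ.IsLoop e
      · obtain ⟨w, hw⟩ := hl
        apply Finset.sum_eq_zero
        intro v _
        by_cases hv : v = w
        · subst hv
          have hzero : Ffun y v = 0 := by
            by_cases h : Quot.mk Γ.Adj v ∈ S
            · exact absurd ⟨v, hw⟩ ((hrep2 ⟨_, h⟩).1 e v (hconn_rep ⟨_, h⟩ v rfl)
                (by simp [TruncGraph.Incid, hw])).1
            · exact hFapp0 y v h
          rw [hzero, mul_zero]
        · rw [Γ.loop_struct hw v hv]; simp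
      · obtain ⟨w, w', hne, hw, hw', hall⟩ := Γ.ord_struct hl ht
        have hsum : ∑ v, (Γ.μ e v : ℤ) * Ffun y v
            = (Γ.μ e w : ℤ) * Ffun y w + (Γ.μ e w' : ℤ) * Ffun y w' := by
          rw [← Finset.sum_subset (Finset.subset_univ ({w, w'} : Finset V))
            (fun v _ hv => by
              simp only [Finset.mem_insert, Finset.mem_singleton, not_or] at hv
              rw [hall v hv.1 hv.2]; simp),
            Finset.sum_pair hne]
        have hq : Quot.mk Γ.Adj w = Quot.mk Γ.Adj w' :=
          Quot.sound ⟨e, by simp [TruncGraph.Incid, hw], by simp [TruncGraph.Incid, hw']⟩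
        rw [hsum, hw, hw']
        by_cases h : Quot.mk Γ.Adj w ∈ S
        · have h' : Quot.mk Γ.Adj w' ∈ S := hq ▸ h
          have hsub : (⟨Quot.mk Γ.Adj w', h'⟩ : S) = ⟨Quot.mk Γ.Adj w, h⟩ :=
            Subtype.ext hq.symm
          rw [hFapp y w h, hFapp y w' h', hsub]
          set q : S := ⟨Quot.mk Γ.Adj w, h⟩ with hqdef
          have hcw : col q w ≠ col q w' := hcol q e w w' (hconn_rep q w rfl)
            (by simp [TruncGraph.Incid, hw]) (by simp [TruncGraph.Incid, hw']) hne
          have h0 : sgn q w + sgn q w' = 0 := by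
            simp only [hsgn]
            by_cases hb : col q w = col q (rep q)
            · rw [if_pos hb, if_neg (fun hh => hcw (hb.trans hh.symm))]; ring
            · rw [if_neg hb, if_pos ?_]
              · ring
              · revert hb hcw
                cases col q w <;> cases col q w' <;> cases col q (rep q) <;> simp
          push_cast
          linear_combination (y q) * h0
        · have h' : Quot.mk Γ.Adj w' ∉ S := fun hh => h (hq ▸ hh)
          rw [hFapp0 y w h, hFapp0 y w' h']; ring
  have hΦF : ∀ (y : S → ℤ) (q : S), (Ffun y) (rep q) = y q := by
    intro y q
    have h : Quot.mk Γ.Adj (rep q) ∈ S := (hrep1 q) ▸ q.2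
    have hsub : (⟨Quot.mk Γ.Adj (rep q), h⟩ : S) = q := Subtype.ext (hrep1 q).symm
    rw [hFapp y (rep q) h, hsub]
    simp only [hsgn]
    simp
  have hFΦ : ∀ x : V → ℤ, x ∈ K → Ffun (fun q => x (rep q)) = x := by
    intro x hx
    have hx' : ∀ e, ∑ v, (Γ.μ e v : ℤ) * x v = 0 := (Γ.mem_ker_iff).mp hx
    funext w
    by_cases h : Quot.mk Γ.Adj w ∈ S
    · rw [hFapp (fun q => x (rep q)) w h]
      have hconn := hconn_rep ⟨_, h⟩ w rfl
      have hv := TruncGraph.val_of_conn hx' (col ⟨_, h⟩) (hcol ⟨_, h⟩) hconn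
      rw [hv]
      simp only [hsgn]
      by_cases hcc : col ⟨_, h⟩ w = col (⟨_, h⟩ : S) (rep ⟨_, h⟩)
      · simp [hcc]
      · simp [hcc]
    · rw [hFapp0 (fun q => x (rep q)) w h]
      by_contra h0
      exact h ⟨w, rfl, TruncGraph.good_of_ne_zero hx' (fun hh => h0 (hh ▸ rfl))⟩
  let F : (S → ℤ) →ₗ[ℤ] (V → ℤ) :=
    { toFun := Ffun
      map_add' := by
        intro y z; funext w
        show Ffun (y + z) w = Ffun y w + Ffun z w
        by_cases h : Quot.mk Γ.Adj w ∈ S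
        · rw [hFapp _ w h, hFapp _ w h, hFapp _ w h]
          simp only [Pi.add_apply]; ring
        · rw [hFapp0 _ w h, hFapp0 _ w h, hFapp0 _ w h]; ring
      map_smul' := by
        intro a y; funext w
        show Ffun (a • y) w = a • Ffun y w
        by_cases h : Quot.mk Γ.Adj w ∈ S
        · rw [hFapp _ w h, hFapp _ w h]
          simp only [Pi.smul_apply, smul_eq_mul]; ring
        · rw [hFapp0 _ w h, hFapp0 _ w h]; simp }
  let F' : (S → ℤ) →ₗ[ℤ] K := LinearMap.codRestrict K F hFker
  let Φ : K →ₗ[ℤ] (S → ℤ) := (LinearMap.funLeft ℤ ℤ rep).comp K.subtype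
  let eKS : K ≃ₗ[ℤ] (S → ℤ) := LinearEquiv.ofLinear Φ F'
    (by
      apply LinearMap.ext; intro y; funext q
      exact hΦF y q)
    (by
      apply LinearMap.ext; intro x
      apply Subtype.ext
      exact hFΦ x.1 x.2)
  have hcard : Fintype.card S = Γ.bc := hbc.symm
  let eFin : S ≃ Fin Γ.bc := Fintype.equivFinOfCardEq hcard
  let eK : K ≃ₗ[ℤ] (Fin Γ.bc → ℤ) := eKS.trans (LinearEquiv.funCongrLeft ℤ ℤ eFin.symm)
  refine ⟨⟨eK⟩, ?_⟩
  have hrank := (Matrix.mulVecLin Γ.B).rank_range_add_rank_ker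
  have hV : Module.rank ℤ (V → ℤ) = Fintype.card V := rank_fun'
  have hker : Module.rank ℤ K = Γ.bc := by
    rw [eK.rank_eq, rank_fun']
    simp
  have hfin : Module.rank ℤ (LinearMap.range (Matrix.mulVecLin Γ.B)) + (Γ.bc : Cardinal)
      = (Fintype.card V : Cardinal) := by
    rw [← hker, ← hV]
    exact hrank
  have hle : Module.rank ℤ (LinearMap.range (Matrix.mulVecLin Γ.B)) < Cardinal.aleph0 := by
    calc Module.rank ℤ (LinearMap.range (Matrix.mulVecLin Γ.B))
        ≤ Module.rank ℤ (E → ℤ) := Submodule.rank_le _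
      _ < Cardinal.aleph0 := by
          rw [rank_fun']; exact Cardinal.nat_lt_aleph0 _
  have htn := congrArg Cardinal.toNat hfin
  rw [Cardinal.toNat_add hle (Cardinal.nat_lt_aleph0 _), Cardinal.toNat_natCast,
    Cardinal.toNat_natCast] at htn
  have hMr : Γ.B.rank
      = Cardinal.toNat (Module.rank ℤ (LinearMap.range (Matrix.mulVecLin Γ.B))) := rfl
  omega
end

section
/- Let (Q,I) be a gentle quiver in which every vertex is a transition vertex or a crossing vertex. Define permutations of the arrow set Q₁ as follows: σ(α) is the unique arrow with s(σ(α)) = t(α) and σ(α)α ∉ I; θ(α) is the unique arrow different from α with the same source as α if s(α) is a crossing vertex, and θ(α) = α if s(α) is a transition vertex; and set φ := θ ∘ σ. Let Q₁^{fc} be the set of arrows lying on forbidden cycles and, for β ∈ Q₁^{fc}, let ρ(β) be the unique arrow with s(ρ(β)) = t(β) and ρ(β)β ∈ I. Then: (a) φ(β) = ρ(β) for every β ∈ Q₁^{fc}, so Q₁^{fc} is φ-stable; (b) for every transition vertex j, the φ-orbit of the unique arrow α_j with s(α_j) = j consists exactly of the arrows of the AG-cycle c(j), and hence has cardinality m(j);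 (c) the assignment j ↦ (φ-orbit of α_j) induces a bijection between the set of κ-orbits of transition vertices and the set of φ-orbits contained in Q₁ ∖ Q₁^{fc}. -/
namespace GentleQuiver

/-- The set `Q₁^{fc}` of arrows lying on a forbidden cycle. -/
def FcSet (G : GentleQuiver) : Set G.A := {β : G.A | ∃ l : List G.A, G.IsForbCycle l ∧ β ∈ l}

end GentleQuiver

namespace Stmt16Aux

variable {A : Type}

lemma chain_rel {R : A → A → Prop} {L : List A} (hc : L.Chain' R)
    {i : ℕ} (h : i + 1 < L.length) : R L[i] L[i+1] := by
  have := List.isChain_iff_getElem.1 hc i (by omega)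
  simpa [List.get_eq_getElem] using this

lemma iterate_get (g : A → A) (L : List A) (hne : L ≠ [])
    (hc : L.Chain' (fun a b => g a = b)) :
    ∀ k (hk : k < L.length), g^[k] (L.head hne) = L[k] := by
  intro k
  induction k with
  | zero => intro hk; simpa using List.head_eq_getElem_zero hne
  | succ k ih =>
    intro hk
    have hk' : k < L.length := by omega
    have h1 : g^[k+1] (L.head hne) = g (g^[k] (L.head hne)) :=
      Function.iterate_succ_apply' g k _
    rw [h1, ih hk']
    exact chain_rel hc hk

lemma two_le_count [DecidableEq A] (L : List A) (a : A) {i j : ℕ} (hij : i < j)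
    (hj : j < L.length) (h1 : L[i]'(by omega) = a) (h2 : L[j] = a) :
    2 ≤ L.count a := by
  have hsplit : L = L.take j ++ L.drop j := (List.take_append_drop j L).symm
  have hmem1 : a ∈ L.take j := by
    have hil : i < (L.take j).length := by simp [List.length_take]; omega
    have : (L.take j)[i] = a := by rw [List.getElem_take]; exact h1
    exact this ▸ List.getElem_mem hil
  have hdne : L.drop j ≠ [] := by
    simp [List.drop_eq_nil_iff]; omega
  have hmem2 : a ∈ L.drop j := by
    have : (L.drop j).head hdne = a := by rw [List.head_drop]; exact h2
    exact this ▸ List.head_mem hdne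
  calc 2 = 1 + 1 := rfl
  _ ≤ L.count a := by
      rw [hsplit, List.count_append]
      exact Nat.add_le_add (List.count_pos_iff.2 hmem1) (List.count_pos_iff.2 hmem2)

lemma orbit_lemma [DecidableEq A] (g : A → A) (hg : Function.Injective g)
    (L : List A) (hne : L ≠ []) (hc : L.Chain' (fun a b => g a = b))
    (hwrap : g (L.getLast hne) = L.head hne)
    (hcount : L.count (L.head hne) = 1) :
    (∀ x, (∃ k, g^[k] (L.head hne) = x) ↔ x ∈ L) ∧
      {x | ∃ k, g^[k] (L.head hne) = x}.ncard = L.length := by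
  set h := L.head hne with hh
  have hlen : 0 < L.length := List.length_pos_iff.2 hne
  have hstep := iterate_get g L hne hc
  have hper : g^[L.length] h = h := by
    have hl1 : L.length = (L.length - 1) + 1 := by omega
    rw [hl1, Function.iterate_succ_apply', hstep _ (by omega)]
    rw [← List.getLast_eq_getElem hne]
    exact hwrap
  have hmul : ∀ q r, g^[q * L.length + r] h = g^[r] h := by
    intro q r
    induction q with
    | zero => simp
    | succ q ih =>
      have : (q+1) * L.length + r = (q * L.length + r) + L.length := by ring
      rw [this, Function.iterate_add_apply, hper]
      exact ih
  have hmod : ∀ k, g^[k] h = g^[k % L.length] h := by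
    intro k
    conv_lhs => rw [← Nat.div_add_mod k L.length]
    rw [Nat.mul_comm]
    exact hmul _ _
  have honce : ∀ i (hi : i < L.length), L[i] = h → i = 0 := by
    intro i hi hLi
    by_contra hi0
    have h0 : L[0] = h := by simpa using (List.head_eq_getElem_zero hne).symm
    have := two_le_count L h (i := 0) (j := i) (by omega) hi h0 hLi
    omega
  have hnodup : L.Nodup := by
    rw [List.nodup_iff_injective_get]
    rintro ⟨i, hi⟩ ⟨j, hj⟩ hij
    simp only [List.get_eq_getElem] at hij
    rcases Nat.lt_trichotomy i j with hlt | heq | hgt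
    · exfalso
      have h1 : g^[i] h = L[i] := hstep i hi
      have h2 : g^[j] h = L[j] := hstep j hj
      have : g^[i] h = g^[i] (g^[j-i] h) := by
        rw [← Function.iterate_add_apply]
        have : i + (j - i) = j := by omega
        rw [this, h2, ← hij, ← h1]
      have h3 : h = g^[j-i] h := (hg.iterate i) this
      have h4 : L[j-i]'(by omega) = h := by rw [← hstep (j-i) (by omega)]; exact h3.symm
      have := honce (j-i) (by omega) h4
      omega
    · simpa using heq
    · exfalso
      have h1 : g^[i] h = L[i] := hstep i hi
      have h2 : g^[j] h = L[j] := hstep j hj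
      have : g^[j] h = g^[j] (g^[i-j] h) := by
        rw [← Function.iterate_add_apply]
        have : j + (i - j) = i := by omega
        rw [this, h1, hij, ← h2]
      have h3 : h = g^[i-j] h := (hg.iterate j) this
      have h4 : L[i-j]'(by omega) = h := by rw [← hstep (i-j) (by omega)]; exact h3.symm
      have := honce (i-j) (by omega) h4
      omega
  have hmemiff : ∀ x, (∃ k, g^[k] h = x) ↔ x ∈ L := by
    intro x
    constructor
    · rintro ⟨k, rfl⟩
      rw [hmod k]
      have hk : k % L.length < L.length := Nat.mod_lt _ hlen
      rw [hstep _ hk]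
      exact List.getElem_mem hk
    · intro hx
      obtain ⟨i, hi, rfl⟩ := List.mem_iff_getElem.1 hx
      exact ⟨i, hstep i hi⟩
  refine ⟨hmemiff, ?_⟩
  have hseteq : {x | ∃ k, g^[k] h = x} = (L.toFinset : Set A) := by
    ext x
    simp only [Set.mem_setOf_eq, Finset.coe_sort_coe, Finset.mem_coe,
      List.mem_toFinset]
    exact hmemiff x
  rw [hseteq, Set.ncard_coe_finset, List.toFinset_card_of_nodup hnodup]

lemma mem_chain'_head_or {R : A → A → Prop} {L : List A} (hc : L.Chain' R) {a : A}
    (ha : a ∈ L) : L.head? = some a ∨ ∃ b ∈ L, R b a := by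
  induction L with
  | nil => simp at ha
  | cons x t ih =>
    rcases List.mem_cons.1 ha with rfl | hat
    · left; rfl
    · right
      have hct : t.Chain' R := hc.tail
      rcases ih hct hat with hh | ⟨b, hb, hr⟩
      · refine ⟨x, List.mem_cons_self, ?_⟩
        have : ∀ y ∈ t.head?, R x y := List.isChain_cons.1 hc |>.1
        exact this a hh
      · exact ⟨b, List.mem_cons_of_mem x hb, hr⟩

lemma mem_chain'_last_or {R : A → A → Prop} {L : List A} (hc : L.Chain' R) {a : A}
    (ha : a ∈ L) : L.getLast? = some a ∨ ∃ b ∈ L, R a b := by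
  induction L with
  | nil => simp at ha
  | cons x t ih =>
    rcases List.mem_cons.1 ha with rfl | hat
    · cases t with
      | nil => left; rfl
      | cons y t' =>
        right
        refine ⟨y, by simp, ?_⟩
        exact (List.isChain_cons_cons.1 hc).1
    · have hct : t.Chain' R := hc.tail
      have htne : t ≠ [] := List.ne_nil_of_mem hat
      rcases ih hct hat with hh | ⟨b, hb, hr⟩
      · left
        cases t with
        | nil => simp at hat
        | cons y t' => rw [List.getLast?_cons_cons]; exact hh
      · exact Or.inr ⟨b, List.mem_cons_of_mem x hb, hr⟩

lemma count_flatMap [DecidableEq A] (f : ℕ → List A) (a : A) :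
    ∀ l : List ℕ, (l.flatMap f).count a = (l.map (fun p => (f p).count a)).sum := by
  intro l
  induction l with
  | nil => simp
  | cons x t ih => simp [List.flatMap_cons, List.count_append, ih]

lemma sum_map_range (g : ℕ → ℕ) (n : ℕ) :
    ((List.range n).map g).sum = ∑ p ∈ Finset.range n, g p := by
  induction n with
  | zero => simp
  | succ n ih => rw [List.range_succ, Finset.sum_range_succ]; simp [ih]

end Stmt16Aux

namespace Stmt16Aux

section QL

variable {G : GentleQuiver} (hG : ∀ v : G.V, G.IsTransition v ∨ G.IsCrossing v)
variable {σ θ : G.A → G.A}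
variable (hσ : ∀ α : G.A, G.s (σ α) = G.t α ∧ ¬ G.rel (σ α) α)
variable (hθt : ∀ α : G.A, G.IsTransition (G.s α) → θ α = α)
variable (hθc : ∀ α : G.A, G.IsCrossing (G.s α) → θ α ≠ α ∧ G.s (θ α) = G.s α)

lemma uniq_out {v : G.V} (h : G.IsTransition v) :
    ∃ β, G.s β = v ∧ ∀ β', G.s β' = v → β' = β := by
  obtain ⟨α, β, -, hsβ, -, hout, -⟩ := h
  exact ⟨β, hsβ, hout⟩

lemma uniq_in {v : G.V} (h : G.IsTransition v) :
    ∃ α, G.t α = v ∧ ∀ α', G.t α' = v → α' = α := by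
  obtain ⟨α, β, htα, -, hin, -, -⟩ := h
  exact ⟨α, htα, hin⟩

lemma no_rel_out_trans {v : G.V} (h : G.IsTransition v) {β c : G.A}
    (hs : G.s β = v) : ¬ G.rel β c := by
  obtain ⟨α, β₀, htα, hsβ₀, hin, hout, hnr⟩ := h
  intro hrel
  have htc : G.t c = v := by rw [← G.rel_comp β c hrel, hs]
  have hc : c = α := hin c htc
  have hb : β = β₀ := hout β hs
  subst hc; subst hb
  exact hnr hrel

include hG hσ hθc in
lemma lemA {a b : G.A} (h : G.FStep a b) : θ (σ a) = b := by
  obtain ⟨hsb, hrel⟩ := h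
  obtain ⟨hsσ, hnσ⟩ := hσ a
  have hne : σ a ≠ b := fun he => hnσ (he ▸ hrel)
  have hcross : G.IsCrossing (G.t a) := by
    rcases hG (G.t a) with htr | hcr
    · exfalso
      obtain ⟨β₀, -, hout⟩ := uniq_out htr
      exact hne ((hout _ hsσ).trans (hout _ hsb).symm)
    · exact hcr
  obtain ⟨hθne, hθs⟩ := hθc (σ a) (by rw [hsσ]; exact hcross)
  obtain ⟨α₁, α₂, β₁, β₂, -, hbne, -, -, hsβ₁, hsβ₂, -, hout, -⟩ := hcross
  have h3s : G.s (θ (σ a)) = G.t a := by rw [hθs]; exact hsσ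
  rcases hout (σ a) hsσ with h1 | h1 <;> rcases hout b hsb with h2 | h2 <;>
    rcases hout (θ (σ a)) h3s with h3 | h3 <;>
    first
      | (exact absurd (h1.trans h2.symm) hne)
      | (exact absurd (h3.trans h1.symm) hθne)
      | (exact h3.trans h2.symm)

include hG hσ hθt in
lemma lemB {a : G.A} (h : ∀ c, ¬ G.FStep a c) :
    G.IsTransition (G.t a) ∧ ∀ b, G.s b = G.t a → θ (σ a) = b := by
  have htr : G.IsTransition (G.t a) := by
    rcases hG (G.t a) with htr | hcr
    · exact htr
    · exfalso
      obtain ⟨α₁, α₂, β₁, β₂, hane, hbne, htα₁, htα₂, hsβ₁, hsβ₂, hin, hout,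
        h11, h22, h12, h21⟩ := hcr
      rcases hin a rfl with rfl | rfl
      · exact h β₁ ⟨hsβ₁, h11⟩
      · exact h β₂ ⟨hsβ₂, h22⟩
  obtain ⟨hsσ, -⟩ := hσ a
  have hθ : θ (σ a) = σ a := hθt (σ a) (by rw [hsσ]; exact htr)
  obtain ⟨β₀, hsβ₀, hout⟩ := uniq_out htr
  refine ⟨htr, fun b hb => ?_⟩
  rw [hθ]
  exact (hout _ hsσ).trans (hout b hb).symm

include hG hσ hθt hθc in
lemma s_phi (a : G.A) : G.s (θ (σ a)) = G.t a := by
  obtain ⟨hsσ, -⟩ := hσ a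
  rcases hG (G.s (σ a)) with htr | hcr
  · rw [hθt _ htr]; exact hsσ
  · rw [(hθc _ hcr).2]; exact hsσ

lemma cycle_succ {l : List G.A} (hcy : G.IsForbCycle l) {a : G.A} (ha : a ∈ l) :
    ∃ b ∈ l, G.FStep a b := by
  obtain ⟨⟨hne, hnd, hch⟩, hw⟩ := hcy
  rcases mem_chain'_last_or hch ha with hl | hsucc
  · refine ⟨l.head hne, List.head_mem hne, ?_⟩
    refine hw (l.head hne) ?_ a hl
    exact Option.mem_def.mpr (List.head?_eq_head hne)
  · exact hsucc

lemma cycle_pred {l : List G.A} (hcy : G.IsForbCycle l) {a : G.A} (ha : a ∈ l) :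
    ∃ b ∈ l, G.FStep b a := by
  obtain ⟨⟨hne, hnd, hch⟩, hw⟩ := hcy
  rcases mem_chain'_head_or hch ha with hl | hsucc
  · refine ⟨l.getLast hne, List.getLast_mem hne, ?_⟩
    refine hw a hl (l.getLast hne) ?_
    exact Option.mem_def.mpr (List.getLast?_eq_getLast hne)
  · exact hsucc

lemma fc_succ {b β : G.A} (hβ : β ∈ G.FcSet) (hstep : G.FStep β b) : b ∈ G.FcSet := by
  obtain ⟨l, hcy, hβl⟩ := hβ
  obtain ⟨b', hb'l, hstep'⟩ := cycle_succ hcy hβl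
  have : b = b' := G.succ_rel_unique β b b' hstep.1 hstep'.1 hstep.2 hstep'.2
  exact ⟨l, hcy, this ▸ hb'l⟩

lemma fc_has_succ {β : G.A} (hβ : β ∈ G.FcSet) : ∃ b, G.FStep β b := by
  obtain ⟨l, hcy, hβl⟩ := hβ
  obtain ⟨b, -, h⟩ := cycle_succ hcy hβl
  exact ⟨b, h⟩

lemma fc_has_pred {β : G.A} (hβ : β ∈ G.FcSet) : ∃ b, G.FStep b β := by
  obtain ⟨l, hcy, hβl⟩ := hβ
  obtain ⟨b, -, h⟩ := cycle_pred hcy hβl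
  exact ⟨b, h⟩

lemma chain_fc_propagate :
    ∀ l : List G.A, l.Chain' G.FStep → ∀ b ∈ l, b ∈ G.FcSet →
      ∀ c ∈ l.getLast?, c ∈ G.FcSet := by
  intro l
  induction l with
  | nil => intro _ b hb; simp at hb
  | cons x t ih =>
    intro hc b hb hbfc c hcl
    rcases List.mem_cons.1 hb with rfl | hbt
    · cases t with
      | nil =>
        simp only [List.getLast?_singleton, Option.mem_def, Option.some_inj] at hcl
        rwa [← hcl]
      | cons y t' =>
        have hstep : G.FStep b y := (List.isChain_cons_cons.1 hc).1
        have hyfc : y ∈ G.FcSet := fc_succ hbfc hstep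
        have : c ∈ (y :: t').getLast? := by
          rwa [List.getLast?_cons_cons] at hcl
        exact ih hc.tail y (List.mem_cons_self) hyfc c this
    · have htne : t ≠ [] := List.ne_nil_of_mem hbt
      have : c ∈ t.getLast? := by
        cases t with
        | nil => simp at hbt
        | cons y t' => rwa [List.getLast?_cons_cons] at hcl
      exact ih hc.tail b hbt hbfc c this

lemma thread_not_fc {l : List G.A} (hth : G.IsForbThread l) {β : G.A} (hβ : β ∈ l) :
    β ∉ G.FcSet := by
  intro hfc
  obtain ⟨⟨hne, hnd, hch⟩, hnc, hr, hl⟩ := hth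
  have hlast : l.getLast hne ∈ G.FcSet := by
    refine chain_fc_propagate l hch β hβ hfc (l.getLast hne) ?_
    exact Option.mem_def.mpr (List.getLast?_eq_getLast hne)
  obtain ⟨b, hb⟩ := fc_has_succ hlast
  exact hr (l.getLast hne) (Option.mem_def.mpr (List.getLast?_eq_getLast hne)) b hb

include hG hσ hθt hθc in
lemma fc_pred_phi {x : G.A} (hfc : θ (σ x) ∈ G.FcSet) : x ∈ G.FcSet := by
  obtain ⟨l, hcy, hmem⟩ := hfc
  obtain ⟨a, hal, hstep⟩ := cycle_pred hcy hmem
  have hsx : G.s (θ (σ x)) = G.t x := s_phi hG hσ hθt hθc x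
  have hta : G.t a = G.t x := by rw [← hstep.1, hsx]
  rcases hG (G.t x) with htr | hcr
  · obtain ⟨α₀, htα₀, hin⟩ := uniq_in htr
    have h1 : a = α₀ := hin a hta
    have h2 : x = α₀ := hin x rfl
    rw [h1, ← h2] at hal
    exact ⟨l, hcy, hal⟩
  · obtain ⟨α₁, α₂, β₁, β₂, hane, hbne, htα₁, htα₂, hsβ₁, hsβ₂, hin, hout,
      h11, h22, h12, h21⟩ := hcr
    obtain ⟨hsσ, hnσ⟩ := hσ x
    have hσout := hout (σ x) hsσ
    have hcross' : G.IsCrossing (G.s (σ x)) := by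
      rw [hsσ]
      exact ⟨α₁, α₂, β₁, β₂, hane, hbne, htα₁, htα₂, hsβ₁, hsβ₂, hin, hout,
        h11, h22, h12, h21⟩
    obtain ⟨hθne, hθs⟩ := hθc (σ x) hcross'
    have hθout := hout (θ (σ x)) (by rw [hθs]; exact hsσ)
    rcases hin x rfl with hx | hx <;> rcases hin a hta with ha | ha
    · rw [ha, ← hx] at hal; exact ⟨l, hcy, hal⟩
    · -- x = α₁, a = α₂ : θ(σ x) = β₁, but rel β₁ α₂ is false
      exfalso
      have hσ2 : σ x = β₂ := by
        rcases hσout with h | h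
        · exact absurd (by rw [h, hx]; exact h11) hnσ
        · exact h
      have hθ1 : θ (σ x) = β₁ := by
        rcases hθout with h | h
        · exact h
        · exact absurd (h.trans hσ2.symm) hθne
      rw [hθ1, ha] at hstep
      exact h12 hstep.2
    · exfalso
      have hσ1 : σ x = β₁ := by
        rcases hσout with h | h
        · exact h
        · exact absurd (by rw [h, hx]; exact h22) hnσ
      have hθ2 : θ (σ x) = β₂ := by
        rcases hθout with h | h
        · exact absurd (h.trans hσ1.symm) hθne
        · exact h
      rw [hθ2, ha] at hstep
      exact h21 hstep.2
    · rw [ha, ← hx] at hal; exact ⟨l, hcy, hal⟩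

include hσ in
lemma sigma_inj : Function.Injective σ := by
  intro a b h
  obtain ⟨hsa, hna⟩ := hσ a
  obtain ⟨hsb, hnb⟩ := hσ b
  rw [h] at hsa hna
  exact G.pred_nonrel_unique (σ b) a b hsa.symm hsb.symm hna hnb

include hG hθt hθc in
lemma theta_invol : ∀ a : G.A, θ (θ a) = a := by
  intro a
  rcases hG (G.s a) with htr | hcr
  · rw [hθt a htr, hθt a htr]
  · obtain ⟨h1, h2⟩ := hθc a hcr
    obtain ⟨h3, h4⟩ := hθc (θ a) (by rw [h2]; exact hcr)
    obtain ⟨α₁, α₂, β₁, β₂, hane, hbne, htα₁, htα₂, hsβ₁, hsβ₂, hin, hout,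
      h11, h22, h12, h21⟩ := hcr
    have ha := hout a rfl
    have hb := hout (θ a) h2
    have hc := hout (θ (θ a)) (h4.trans h2)
    rcases ha with h | h <;> rcases hb with h' | h' <;> rcases hc with h'' | h'' <;>
      first
        | (exact absurd (h'.trans h.symm) h1)
        | (exact absurd (h''.trans h'.symm) h3)
        | (exact h''.trans h.symm)

include hG hσ hθt hθc in
lemma phi_inj : Function.Injective (θ ∘ σ) := by
  have hθi : Function.Injective θ :=
    Function.LeftInverse.injective (g := θ) (theta_invol hG hθt hθc)
  exact hθi.comp (sigma_inj hσ)


lemma not_mem_of_right_ext {l : List G.A} (hp : G.IsForbPath l) (hne : l ≠ [])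
    (hleft : ∀ c, ¬ G.FStep c (l.head hne)) {c : G.A}
    (hstep : G.FStep (l.getLast hne) c) : c ∉ l := by
  intro hcl
  obtain ⟨i, hi, hic⟩ := List.mem_iff_getElem.1 hcl
  obtain ⟨-, hnd, hch⟩ := hp
  rcases Nat.eq_zero_or_pos i with rfl | hi0
  · have : c = l.head hne := by rw [← hic, List.head_eq_getElem_zero hne]
    rw [this] at hstep
    exact hleft _ hstep
  · have hpred : G.FStep l[i-1] l[i] := by
      have : (i-1) + 1 < l.length := by omega
      have h := chain_rel hch this
      have hieq : i - 1 + 1 = i := by omega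
      simp only [hieq] at h
      exact h
    rw [hic] at hpred
    have heq : l[i-1] = l.getLast hne :=
      G.pred_rel_unique c l[i-1] (l.getLast hne) hpred.1.symm hstep.1.symm
        hpred.2 hstep.2
    rw [List.getLast_eq_getElem hne] at heq
    have := hnd.getElem_inj_iff.1 heq
    omega

lemma not_mem_of_left_ext {l : List G.A} (hp : G.IsForbPath l) (hne : l ≠ [])
    {x : G.A} (hx : x ∈ l) (hxfc : x ∉ G.FcSet) {c : G.A}
    (hstep : G.FStep c (l.head hne)) : c ∉ l := by
  intro hcl
  obtain ⟨i, hi, hic⟩ := List.mem_iff_getElem.1 hcl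
  obtain ⟨-, hnd, hch⟩ := hp
  by_cases hi1 : i + 1 < l.length
  · have hsucc : G.FStep l[i] l[i+1] := chain_rel hch hi1
    rw [hic] at hsucc
    have heq : l[i+1] = l.head hne :=
      G.succ_rel_unique c l[i+1] (l.head hne) hsucc.1 hstep.1 hsucc.2 hstep.2
    rw [List.head_eq_getElem_zero hne] at heq
    have := hnd.getElem_inj_iff.1 heq
    omega
  · have : i = l.length - 1 := by omega
    have hc : c = l.getLast hne := by
      subst this
      rw [List.getLast_eq_getElem hne, ← hic]
    have hcyc : G.IsForbCycle l := by
      refine ⟨⟨hne, hnd, hch⟩, ?_⟩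
      intro a ha b hb
      rw [List.head?_eq_head hne] at ha
      rw [List.getLast?_eq_getLast hne] at hb
      cases ha; cases hb
      rw [← hc]
      exact hstep
    exact hxfc ⟨l, hcyc, hx⟩

lemma extend_right_path {l : List G.A} (hp : G.IsForbPath l) (hne : l ≠ [])
    (hleft : ∀ c, ¬ G.FStep c (l.head hne)) {c : G.A}
    (hstep : G.FStep (l.getLast hne) c) :
    G.IsForbPath (l ++ [c]) ∧ (l ++ [c]).head (by simp) = l.head hne := by
  have hcnot : c ∉ l := not_mem_of_right_ext hp hne hleft hstep
  obtain ⟨-, hnd, hch⟩ := hp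
  refine ⟨⟨by simp, ?_, ?_⟩, ?_⟩
  · rw [List.nodup_append]
    exact ⟨hnd, List.nodup_singleton c, by simp only [List.mem_singleton]; rintro a ha b rfl rfl; exact hcnot ha⟩
  · refine List.IsChain.append hch (List.isChain_singleton c) ?_
    intro a ha b hb
    rw [List.getLast?_eq_getLast hne] at ha
    cases ha
    simp only [List.head?_cons, Option.mem_def, Option.some_inj] at hb
    rw [← hb]
    exact hstep
  · rw [List.head_append]
    simp [hne]

lemma thread_extend :
    ∀ (m : ℕ) (l : List G.A) (hne : l ≠ []), G.IsForbPath l →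
      (∀ c, ¬ G.FStep c (l.head hne)) → Fintype.card G.A ≤ l.length + m →
      ∃ (l' : List G.A) (hne' : l' ≠ []), G.IsForbThread l' ∧
        l'.head hne' = l.head hne ∧ ∀ x ∈ l, x ∈ l' := by
  intro m
  induction m with
  | zero =>
    intro l hne hp hleft hcard
    by_cases hex : ∃ c, G.FStep (l.getLast hne) c
    · exfalso
      obtain ⟨c, hc⟩ := hex
      have hcnot : c ∉ l := not_mem_of_right_ext hp hne hleft hc
      have hnd : (l ++ [c]).Nodup := by
        rw [List.nodup_append]
        exact ⟨hp.2.1, List.nodup_singleton c, by simp only [List.mem_singleton]; rintro a ha b rfl rfl; exact hcnot ha⟩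
      have := hnd.length_le_card
      simp at this
      omega
    · refine ⟨l, hne, ⟨hp, ?_, ?_, ?_⟩, rfl, fun x hx => hx⟩
      · intro hcyc
        have := hcyc.2 (l.head hne) (Option.mem_def.mpr (List.head?_eq_head hne))
          (l.getLast hne) (Option.mem_def.mpr (List.getLast?_eq_getLast hne))
        exact hleft _ this
      · intro b hb c hc
        rw [List.getLast?_eq_getLast hne] at hb
        cases hb
        exact hex ⟨c, hc⟩
      · intro a ha c hc
        rw [List.head?_eq_head hne] at ha
        cases ha
        exact hleft c hc
  | succ m ih =>
    intro l hne hp hleft hcard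
    by_cases hex : ∃ c, G.FStep (l.getLast hne) c
    · obtain ⟨c, hc⟩ := hex
      obtain ⟨hp', hhead'⟩ := extend_right_path hp hne hleft hc
      have hne' : l ++ [c] ≠ [] := by simp
      have hleft' : ∀ c', ¬ G.FStep c' ((l ++ [c]).head hne') := by
        rw [hhead']
        exact hleft
      obtain ⟨l', hne'', hth, hh, hsub⟩ := ih (l ++ [c]) hne' hp' hleft'
        (by simp; omega)
      refine ⟨l', hne'', hth, by rw [hh, hhead'], fun x hx => hsub x ?_⟩
      simp [hx]
    · refine ⟨l, hne, ⟨hp, ?_, ?_, ?_⟩, rfl, fun x hx => hx⟩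
      · intro hcyc
        have := hcyc.2 (l.head hne) (Option.mem_def.mpr (List.head?_eq_head hne))
          (l.getLast hne) (Option.mem_def.mpr (List.getLast?_eq_getLast hne))
        exact hleft _ this
      · intro b hb c hc
        rw [List.getLast?_eq_getLast hne] at hb
        cases hb
        exact hex ⟨c, hc⟩
      · intro a ha c hc
        rw [List.head?_eq_head hne] at ha
        cases ha
        exact hleft c hc

lemma extend_left_path {l : List G.A} (hp : G.IsForbPath l) (hne : l ≠ [])
    {x : G.A} (hx : x ∈ l) (hxfc : x ∉ G.FcSet) {c : G.A}
    (hstep : G.FStep c (l.head hne)) : G.IsForbPath (c :: l) := by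
  have hcnot : c ∉ l := not_mem_of_left_ext hp hne hx hxfc hstep
  obtain ⟨-, hnd, hch⟩ := hp
  refine ⟨by simp, by simp [hnd, hcnot], ?_⟩
  refine List.isChain_cons.2 ?_
  refine ⟨?_, hch⟩
  intro y hy
  rw [List.head?_eq_head hne] at hy
  cases hy
  exact hstep

lemma extend_left_max :
    ∀ (m : ℕ) (l : List G.A) (hne : l ≠ []), G.IsForbPath l →
      ∀ x ∈ l, x ∉ G.FcSet → Fintype.card G.A ≤ l.length + m →
      ∃ (l' : List G.A) (hne' : l' ≠ []), G.IsForbPath l' ∧ (∀ y ∈ l, y ∈ l') ∧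
        (∀ c, ¬ G.FStep c (l'.head hne')) := by
  intro m
  induction m with
  | zero =>
    intro l hne hp x hx hxfc hcard
    by_cases hex : ∃ c, G.FStep c (l.head hne)
    · exfalso
      obtain ⟨c, hc⟩ := hex
      have hcnot : c ∉ l := not_mem_of_left_ext hp hne hx hxfc hc
      have hnd : (c :: l).Nodup := by simp [hp.2.1, hcnot]
      have := hnd.length_le_card
      simp at this
      omega
    · push_neg at hex
      exact ⟨l, hne, hp, fun y hy => hy, hex⟩
  | succ m ih =>
    intro l hne hp x hx hxfc hcard
    by_cases hex : ∃ c, G.FStep c (l.head hne)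
    · obtain ⟨c, hc⟩ := hex
      have hp' : G.IsForbPath (c :: l) := extend_left_path hp hne hx hxfc hc
      obtain ⟨l', hne', hp'', hsub, hmax⟩ := ih (c :: l) (by simp) hp'
        x (by simp [hx]) hxfc (by simp; omega)
      exact ⟨l', hne', hp'', fun y hy => hsub y (by simp [hy]), hmax⟩
    · push_neg at hex
      exact ⟨l, hne, hp, fun y hy => hy, hex⟩

lemma exists_thread_from {v : G.V} (htr : G.IsTransition v) {a : G.A}
    (ha : G.s a = v) :
    ∃ (l : List G.A) (hne : l ≠ []), G.IsForbThread l ∧ l.head hne = a := by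
  have hp : G.IsForbPath [a] := ⟨by simp, List.nodup_singleton a, List.isChain_singleton a⟩
  have hleft : ∀ c, ¬ G.FStep c (([a] : List G.A).head (by simp)) := by
    intro c hc
    simp only [List.head_cons] at hc
    exact no_rel_out_trans htr ha hc.2
  obtain ⟨l', hne', hth, hh, -⟩ := thread_extend (Fintype.card G.A) [a] (by simp)
    hp hleft (by simp)
  exact ⟨l', hne', hth, by simpa using hh⟩

lemma exists_thread_through {x : G.A} (hx : x ∉ G.FcSet) :
    ∃ (l : List G.A) (hne : l ≠ []), G.IsForbThread l ∧ x ∈ l := by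
  have hp : G.IsForbPath [x] := ⟨by simp, List.nodup_singleton x, List.isChain_singleton x⟩
  obtain ⟨l₁, hne₁, hp₁, hsub₁, hmax₁⟩ := extend_left_max (Fintype.card G.A) [x]
    (by simp) hp x (by simp) hx (by simp)
  obtain ⟨l', hne', hth, -, hsub⟩ := thread_extend (Fintype.card G.A) l₁ hne₁
    hp₁ hmax₁ (by have := hp₁.2.1.length_le_card; omega)
  exact ⟨l', hne', hth, hsub x (hsub₁ x (by simp))⟩

include hG in
lemma thread_head_trans {l : List G.A} (hth : G.IsForbThread l) (hne : l ≠ []) :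
    G.IsTransition (G.s (l.head hne)) := by
  obtain ⟨hp, hnc, hr, hl⟩ := hth
  rcases hG (G.s (l.head hne)) with htr | hcr
  · exact htr
  · exfalso
    obtain ⟨α₁, α₂, β₁, β₂, hane, hbne, htα₁, htα₂, hsβ₁, hsβ₂, hin, hout,
      h11, h22, h12, h21⟩ := hcr
    have hha : l.head? = some (l.head hne) := List.head?_eq_head hne
    rcases hout (l.head hne) rfl with h | h
    · exact hl (l.head hne) (Option.mem_def.mpr hha) α₁ ⟨by rw [htα₁], by rw [h]; exact h11⟩
    · exact hl (l.head hne) (Option.mem_def.mpr hha) α₂ ⟨by rw [htα₂], by rw [h]; exact h22⟩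

end QL

end Stmt16Aux


/-- let `(Q, I)` be a gentle quiver in which every vertex is a transition
or crossing vertex.  Let `σ` send each arrow to its unique successor without relation,
let `θ` fix arrows starting at transition vertices and swap the two arrows with common
source at crossing vertices, and set `φ := θ ∘ σ`.  Let `ρ` send each arrow `β` on a
forbidden cycle to the unique arrow with `s(ρβ) = t(β)` and `ρ(β)β ∈ I`, and let `κ` be
the permutation of transition vertices induced by forbidden threads.  Then:
(a) `φ(β) = ρ(β)` for every `β ∈ Q₁^{fc}`, so `Q₁^{fc}` is `φ`-stable;
(b) for every transition vertex `j` with unique outgoing arrow `α_j`, and every `n ≥ 1`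
minimal with `κⁿ(j) = j` and every choice of forbidden threads `f p` starting at
`κᵖ(j)`, the `φ`-orbit of `α_j` consists exactly of the arrows of the AG-cycle
`c(j) = f_{n} ⋯ f_1` and has cardinality `m(j) = Σ_{p<n} length (f p)`;
(c) `j ↦ (φ`-orbit of `α_j)` induces a bijection between the set of `κ`-orbits of
transition vertices and the set of `φ`-orbits contained in `Q₁ ∖ Q₁^{fc}`. -/
theorem stmt16 (G : GentleQuiver) (hG : ∀ v : G.V, G.IsTransition v ∨ G.IsCrossing v)
    (σ : G.A → G.A) (hσ : ∀ α : G.A, G.s (σ α) = G.t α ∧ ¬ G.rel (σ α) α)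
    (θ : G.A → G.A)
    (hθt : ∀ α : G.A, G.IsTransition (G.s α) → θ α = α)
    (hθc : ∀ α : G.A, G.IsCrossing (G.s α) → θ α ≠ α ∧ G.s (θ α) = G.s α)
    (ρ : G.A → G.A)
    (hρ : ∀ β ∈ G.FcSet, G.s (ρ β) = G.t β ∧ G.rel (ρ β) β)
    (κ : G.V → G.V)
    (hκ : ∀ v : G.V, G.IsTransition v → ∀ l : List G.A,
      G.IsForbThread l → G.StartsAt l v → G.EndsAt l (κ v)) :
    -- (a)
    (∀ β ∈ G.FcSet, (θ ∘ σ) β = ρ β ∧ (θ ∘ σ) β ∈ G.FcSet) ∧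
    -- (b)
    (∀ j : G.V, G.IsTransition j → ∀ αj : G.A, G.s αj = j →
      ∀ n : ℕ, 0 < n → κ^[n] j = j → (∀ q : ℕ, 0 < q → κ^[q] j = j → n ≤ q) →
      ∀ f : ℕ → List G.A,
        (∀ p : ℕ, p < n → G.IsForbThread (f p) ∧ G.StartsAt (f p) (κ^[p] j)) →
        (∀ x : G.A, (∃ k : ℕ, (θ ∘ σ)^[k] αj = x) ↔ x ∈ (List.range n).flatMap f) ∧
        Set.ncard {x : G.A | ∃ k : ℕ, (θ ∘ σ)^[k] αj = x} =
          ∑ p ∈ Finset.range n, (f p).length) ∧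
    -- (c)
    (∃ F : Quot (fun v w : {v : G.V // G.IsTransition v} => κ v.1 = w.1) →
        Quot (fun a b : {x : G.A // x ∉ G.FcSet} => (θ ∘ σ) a.1 = b.1),
      Function.Bijective F ∧
      ∀ (j : {v : G.V // G.IsTransition v}) (a : {x : G.A // x ∉ G.FcSet}),
        G.s a.1 = j.1 → F (Quot.mk _ j) = Quot.mk _ a) := by
  classical
  set g : G.A → G.A := θ ∘ σ with hg
  have hginj : Function.Injective g := Stmt16Aux.phi_inj hG hσ hθt hθc
  have hlemA : ∀ {a b : G.A}, G.FStep a b → g a = b :=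
    fun h => Stmt16Aux.lemA hG hσ hθc h
  have hlemB : ∀ {a : G.A}, (∀ c, ¬ G.FStep a c) →
      G.IsTransition (G.t a) ∧ ∀ b, G.s b = G.t a → g a = b :=
    fun h => Stmt16Aux.lemB hG hσ hθt h
  refine ⟨?_, ?_, ?_⟩
  · -- (a)
    intro β hβ
    obtain ⟨hsρ, hrρ⟩ := hρ β hβ
    have hstep : G.FStep β (ρ β) := ⟨hsρ, hrρ⟩
    have h1 : g β = ρ β := hlemA hstep
    exact ⟨h1, h1 ▸ Stmt16Aux.fc_succ hβ hstep⟩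
  · -- (b)
    intro j htrj αj hαj n hn hκn hmin f hf
    have hfp : ∀ p, p < n → (f p) ≠ [] := fun p hp => (hf p hp).1.1.1
    have hrm : ∀ p (hp : p < n), ∀ c, ¬ G.FStep ((f p).getLast (hfp p hp)) c :=
      fun p hp c => (hf p hp).1.2.2.1 _
        (Option.mem_def.mpr (List.getLast?_eq_getLast (hfp p hp))) c
    have hheadp : ∀ p (hp : p < n), G.s ((f p).head (hfp p hp)) = κ^[p] j :=
      fun p hp => (hf p hp).2 _ (Option.mem_def.mpr (List.head?_eq_head _))
    have key : ∀ p, p < n → G.IsTransition (κ^[p] j) := by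
      intro p hp
      induction p with
      | zero => simpa using htrj
      | succ p ih =>
        have hp' : p < n := by omega
        have htrp := ih hp'
        have hend := hκ _ htrp (f p) (hf p hp').1 (hf p hp').2
        have hendt : G.t ((f p).getLast (hfp p hp')) = κ^[p+1] j := by
          have := hend _ (Option.mem_def.mpr (List.getLast?_eq_getLast (hfp p hp')))
          rw [Function.iterate_succ_apply' κ p j]
          exact this
        have := (hlemB (hrm p hp')).1
        rwa [hendt] at this
    have hendt : ∀ p (hp : p < n), G.t ((f p).getLast (hfp p hp)) = κ^[p+1] j := by
      intro p hp
      have hend := hκ _ (key p hp) (f p) (hf p hp).1 (hf p hp).2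
      have := hend _ (Option.mem_def.mpr (List.getLast?_eq_getLast (hfp p hp)))
      rw [Function.iterate_succ_apply' κ p j]
      exact this
    have hlink : ∀ p (hp1 : p < n) (hp : p + 1 < n),
        g ((f p).getLast (hfp p hp1)) = (f (p+1)).head (hfp (p+1) hp) := by
      intro p hp1 hp
      refine (hlemB (hrm p hp1)).2 _ ?_
      rw [hheadp (p+1) hp, hendt p hp1]
    have houtj : ∀ b, G.s b = j → b = αj := by
      obtain ⟨β₀, hsβ₀, hout⟩ := Stmt16Aux.uniq_out htrj
      intro b hb
      rw [hout b hb, ← hout αj hαj]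
    have hhead0 : (f 0).head (hfp 0 hn) = αj := by
      refine houtj _ ?_
      have := hheadp 0 hn
      rwa [Function.iterate_zero_apply] at this
    set L := (List.range n).flatMap f with hL
    have hLne : L ≠ [] := by
      have : (f 0).head (hfp 0 hn) ∈ L :=
        List.mem_flatMap.2 ⟨0, List.mem_range.2 hn, List.head_mem _⟩
      exact List.ne_nil_of_mem this
    have hchain : ∀ m, 1 ≤ m → m ≤ n →
        ((List.range m).flatMap f).Chain' (fun a b => g a = b) ∧
        ((List.range m).flatMap f).getLast? = (f (m-1)).getLast? := by
      intro m
      induction m with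
      | zero => intro h1 _; omega
      | succ m ih =>
        intro h1 h2
        rcases Nat.eq_zero_or_pos m with rfl | hm
        · have he : (List.range 1).flatMap f = f 0 := by simp [List.range_succ]
          rw [he]
          exact ⟨List.IsChain.imp (fun a b hab => hlemA hab) (hf 0 hn).1.1.2.2, rfl⟩
        · have hmn : m < n := by omega
          have hm' := ih (by omega) (by omega)
          have hsing : [m].flatMap f = f m := by simp
          rw [List.range_succ, List.flatMap_append, hsing]
          constructor
          · refine List.IsChain.append hm'.1
              (List.IsChain.imp (fun a b hab => hlemA hab) (hf m hmn).1.1.2.2) ?_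
            intro x hxm y hy
            rw [hm'.2, List.getLast?_eq_getLast (hfp (m-1) (by omega))] at hxm
            cases hxm
            rw [List.head?_eq_head (hfp m hmn)] at hy
            cases hy
            have hl := hlink (m-1) (by omega) (by omega)
            have hm1 : m - 1 + 1 = m := by omega
            simp only [hm1] at hl
            exact hl
          · have hms : m + 1 - 1 = m := by omega
            rw [hms, List.getLast?_append, List.getLast?_eq_getLast (hfp m hmn)]
            simp
    have hchainL : L.Chain' (fun a b => g a = b) := (hchain n hn le_rfl).1
    have hn1 : n - 1 < n := by omega
    have hgetLastL : L.getLast hLne = (f (n-1)).getLast (hfp (n-1) hn1) := by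
      have h2 := (hchain n hn le_rfl).2
      rw [List.getLast?_eq_getLast hLne,
        List.getLast?_eq_getLast (hfp (n-1) hn1)] at h2
      exact Option.some_inj.1 h2
    have hheadL : L.head hLne = αj := by
      rw [← hhead0]
      obtain ⟨n', rfl⟩ : ∃ n', n = n' + 1 := ⟨n-1, by omega⟩
      have he : L = f 0 ++ (List.map Nat.succ (List.range n')).flatMap f := by
        rw [hL, List.range_succ_eq_map, List.flatMap_cons]
      have hd : L.head? = (f 0).head? := by
        rw [he, List.head?_append, List.head?_eq_head (hfp 0 hn)]
        simp
      rw [List.head?_eq_head hLne, List.head?_eq_head (hfp 0 hn)] at hd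
      exact Option.some_inj.1 hd
    have hcount : L.count αj = 1 := by
      rw [hL, Stmt16Aux.count_flatMap, Stmt16Aux.sum_map_range (fun p => (f p).count αj) n]
      rw [Finset.sum_eq_single 0]
      · refine List.count_eq_one_of_mem (hf 0 hn).1.1.2.1 ?_
        exact hhead0 ▸ List.head_mem _
      · intro p hp hp0
        have hpn : p < n := Finset.mem_range.1 hp
        rw [List.count_eq_zero]
        intro hmem
        rcases Stmt16Aux.mem_chain'_head_or (hf p hpn).1.1.2.2 hmem with hh | ⟨b, hb, hr⟩
        · rw [List.head?_eq_head (hfp p hpn)] at hh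
          have : (f p).head (hfp p hpn) = αj := by
            exact Option.some_inj.1 hh
          have hj : κ^[p] j = j := by rw [← hheadp p hpn, this, hαj]
          have := hmin p (by omega) hj
          omega
        · exact Stmt16Aux.no_rel_out_trans htrj hαj hr.2
      · intro h0
        exact absurd (Finset.mem_range.2 hn) h0
    have hwrap : g (L.getLast hLne) = L.head hLne := by
      rw [hgetLastL, hheadL]
      refine (hlemB (hrm (n-1) hn1)).2 αj ?_
      have h1 := hendt (n-1) hn1
      have h2 : n - 1 + 1 = n := by omega
      rw [h2] at h1
      rw [hαj, h1, hκn]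
    have horb := Stmt16Aux.orbit_lemma g hginj L hLne hchainL hwrap
      (by rw [hheadL]; exact hcount)
    rw [hheadL] at horb
    refine ⟨horb.1, ?_⟩
    rw [horb.2, hL, List.length_flatMap]
    exact Stmt16Aux.sum_map_range (fun p => (f p).length) n
  · -- (c)
    let r : {x : G.A // x ∉ G.FcSet} → {x : G.A // x ∉ G.FcSet} → Prop :=
      fun a b => g a.1 = b.1
    let rV : {v : G.V // G.IsTransition v} → {v : G.V // G.IsTransition v} → Prop :=
      fun v w => κ v.1 = w.1
    have houtEx : ∀ v : {v : G.V // G.IsTransition v},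
        ∃ β, G.s β = v.1 ∧ ∀ β', G.s β' = v.1 → β' = β := fun v => Stmt16Aux.uniq_out v.2
    choose out hout_s hout_u using houtEx
    have hout_nfc : ∀ v, out v ∉ G.FcSet := by
      intro v hmem
      obtain ⟨b, hb⟩ := Stmt16Aux.fc_has_pred hmem
      exact Stmt16Aux.no_rel_out_trans v.2 (hout_s v) hb.2
    have hThrEx : ∀ v : {v : G.V // G.IsTransition v},
        ∃ (l : List G.A) (hne : l ≠ []), G.IsForbThread l ∧ l.head hne = out v :=
      fun v => Stmt16Aux.exists_thread_from v.2 (hout_s v)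
    choose T Tne Tth Thead using hThrEx
    have Tstart : ∀ v, G.StartsAt (T v) v.1 := by
      intro v a ha
      rw [List.head?_eq_head (Tne v)] at ha
      cases ha
      rw [Thead v]
      exact hout_s v
    have Trm : ∀ v, ∀ c, ¬ G.FStep ((T v).getLast (Tne v)) c := fun v c =>
      (Tth v).2.2.1 _ (Option.mem_def.mpr (List.getLast?_eq_getLast (Tne v))) c
    have Tend_t : ∀ v, G.t ((T v).getLast (Tne v)) = κ v.1 := fun v =>
      hκ v.1 v.2 (T v) (Tth v) (Tstart v) _
        (Option.mem_def.mpr (List.getLast?_eq_getLast (Tne v)))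
    have htransκ : ∀ v : {v : G.V // G.IsTransition v}, G.IsTransition (κ v.1) := by
      intro v
      have := (hlemB (Trm v)).1
      rwa [Tend_t v] at this
    let κS : {v : G.V // G.IsTransition v} → {v : G.V // G.IsTransition v} :=
      fun v => ⟨κ v.1, htransκ v⟩
    have Tchain : ∀ v, (T v).Chain' (fun a b => g a = b) := fun v =>
      List.IsChain.imp (fun a b hab => hlemA hab) (Tth v).1.2.2
    have hlenT : ∀ v, 0 < (T v).length := fun v => List.length_pos_iff.2 (Tne v)
    have hiter : ∀ v, g^[(T v).length] (out v) = out (κS v) := by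
      intro v
      have hstep := Stmt16Aux.iterate_get g (T v) (Tne v) (Tchain v)
      have h1 : (T v).length = ((T v).length - 1) + 1 := by have := hlenT v; omega
      have h2 : g^[(T v).length - 1] (out v) = (T v).getLast (Tne v) := by
        rw [← Thead v, hstep _ (by have := hlenT v; omega), List.getLast_eq_getElem]
      rw [h1, Function.iterate_succ_apply', h2]
      refine (hlemB (Trm v)).2 _ ?_
      rw [hout_s (κS v)]
      exact (Tend_t v).symm
    have stable : ∀ x : G.A, x ∉ G.FcSet → g x ∉ G.FcSet := fun x hx hgx =>
      hx (Stmt16Aux.fc_pred_phi hG hσ hθt hθc hgx)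
    have quotIter : ∀ (k : ℕ) (a b : {x : G.A // x ∉ G.FcSet}),
        g^[k] a.1 = b.1 → Quot.mk r a = Quot.mk r b := by
      intro k
      induction k with
      | zero => intro a b h; rw [Subtype.ext h]
      | succ k ih =>
        intro a b h
        have h1 : Quot.mk r a = Quot.mk r ⟨g a.1, stable a.1 a.2⟩ := Quot.sound rfl
        rw [h1]
        exact ih _ b ((Function.iterate_succ_apply g k a.1) ▸ h)
    have wd : ∀ v w, rV v w →
        Quot.mk r ⟨out v, hout_nfc v⟩ = Quot.mk r ⟨out w, hout_nfc w⟩ := by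
      intro v w hvw
      have hw' : κS v = w := Subtype.ext hvw
      refine quotIter ((T v).length) _ _ ?_
      rw [hiter v, hw']
    refine ⟨Quot.lift (fun v => Quot.mk r ⟨out v, hout_nfc v⟩) wd, ⟨?_, ?_⟩, ?_⟩
    · -- injective
      have hreach : ∀ (k : ℕ) (v : {v : G.V // G.IsTransition v}),
          ∃ (w : {v : G.V // G.IsTransition v}) (r' : ℕ),
            r' < (T w).length ∧ g^[k] (out v) = g^[r'] (out w) ∧ ∃ m, κ^[m] v.1 = w.1 := by
        intro k
        induction k with
        | zero => intro v; exact ⟨v, 0, hlenT v, rfl, 0, rfl⟩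
        | succ k ih =>
          intro v
          obtain ⟨w, r', hr', heq, m, hm⟩ := ih v
          by_cases hlt : r' + 1 < (T w).length
          · refine ⟨w, r'+1, hlt, ?_, m, hm⟩
            rw [Function.iterate_succ_apply' g k, heq, ← Function.iterate_succ_apply' g r']
          · have hr1 : r' + 1 = (T w).length := by omega
            refine ⟨κS w, 0, hlenT _, ?_, m+1, ?_⟩
            · rw [Function.iterate_succ_apply' g k, heq,
                ← Function.iterate_succ_apply' g r']
              simp only [Nat.succ_eq_add_one]
              rw [hr1, hiter w]
              simp
            · rw [Function.iterate_succ_apply' κ m, hm]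
      have out_inj_v : ∀ v w : {v : G.V // G.IsTransition v}, out v = out w → v = w := by
        intro v w h
        apply Subtype.ext
        rw [← hout_s v, ← hout_s w, h]
      have korbit_of_orbit : ∀ (v w : {v : G.V // G.IsTransition v}),
          (∃ k, g^[k] (out v) = out w) → ∃ m, κ^[m] v.1 = w.1 := by
        rintro v w ⟨k, hk⟩
        obtain ⟨w', r', hr', heq, m, hm⟩ := hreach k v
        rw [hk] at heq
        have hgetw : g^[r'] (out w') = (T w')[r'] := by
          rw [← Thead w']
          exact Stmt16Aux.iterate_get g (T w') (Tne w') (Tchain w') r' hr'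
        rcases Nat.eq_zero_or_pos r' with rfl | hr0
        · simp only [Function.iterate_zero_apply] at heq
          refine ⟨m, ?_⟩
          rw [hm, (out_inj_v w' w heq.symm)]
        · exfalso
          have hpred : G.FStep (T w')[r'-1] (T w')[r'] := by
            have hlt : r' - 1 + 1 < (T w').length := by omega
            have h := Stmt16Aux.chain_rel (Tth w').1.2.2 hlt
            have hr1 : r' - 1 + 1 = r' := by omega
            simp only [hr1] at h
            exact h
          rw [hgetw] at heq
          apply Stmt16Aux.no_rel_out_trans w.2 (hout_s w) (c := (T w')[r'-1])
          rw [heq]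
          exact hpred.2
      have quotKIter : ∀ (m : ℕ) (v w : {v : G.V // G.IsTransition v}),
          κ^[m] v.1 = w.1 → Quot.mk rV v = Quot.mk rV w := by
        intro m
        induction m with
        | zero => intro v w h; rw [Subtype.ext h]
        | succ m ih =>
          intro v w h
          have h1 : Quot.mk rV v = Quot.mk rV (κS v) := Quot.sound rfl
          rw [h1]
          exact ih (κS v) w ((Function.iterate_succ_apply κ m v.1) ▸ h)
      have hperiod : ∀ x : G.A, ∃ N, 0 < N ∧ g^[N] x = x := by
        intro x
        have hni : ¬ Function.Injective (fun i : Fin (Fintype.card G.A + 1) => g^[i.1] x) := by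
          intro hinj
          have := Fintype.card_le_of_injective _ hinj
          simp at this
        obtain ⟨i, jj, heq, hne⟩ := Function.not_injective_iff.1 hni
        rcases Nat.lt_or_ge i.1 jj.1 with hij | hij
        · refine ⟨jj.1 - i.1, Nat.sub_pos_of_lt hij, ?_⟩
          have h3 : g^[i.1] (g^[jj.1 - i.1] x) = g^[i.1] x := by
            rw [← Function.iterate_add_apply]
            have h4 : i.1 + (jj.1 - i.1) = jj.1 := by omega
            rw [h4]
            exact heq.symm
          exact hginj.iterate i.1 h3
        · have hne' : i.1 ≠ jj.1 := fun hc => hne (Fin.ext hc)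
          refine ⟨i.1 - jj.1, Nat.sub_pos_of_lt (lt_of_le_of_ne hij (Ne.symm hne')), ?_⟩
          have h3 : g^[jj.1] (g^[i.1 - jj.1] x) = g^[jj.1] x := by
            rw [← Function.iterate_add_apply]
            have h4 : jj.1 + (i.1 - jj.1) = i.1 := by omega
            rw [h4]
            exact heq
          exact hginj.iterate jj.1 h3
      have hsymm : ∀ a b : G.A, (∃ k, g^[k] a = b) → ∃ m2, g^[m2] b = a := by
        rintro a b ⟨k, rfl⟩
        obtain ⟨N, hN, hNa⟩ := hperiod a
        have hmult : ∀ t, g^[t*N] a = a := by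
          intro t
          induction t with
          | zero => simp
          | succ t iht =>
            have h5 : (t+1)*N = t*N + N := by ring
            rw [h5, Function.iterate_add_apply, hNa, iht]
        have hkN : k ≤ (k+1)*N := by
          calc k ≤ k + 1 := by omega
          _ ≤ (k+1)*N := Nat.le_mul_of_pos_right _ hN
        refine ⟨(k+1)*N - k, ?_⟩
        rw [← Function.iterate_add_apply]
        have h6 : (k+1)*N - k + k = (k+1)*N := by omega
        rw [h6]
        exact hmult (k+1)
      have eqv_orbit : ∀ a b : {x : G.A // x ∉ G.FcSet}, Relation.EqvGen r a b →
          ∃ k, g^[k] a.1 = b.1 := by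
        intro a b h
        induction h with
        | rel a b hab => exact ⟨1, hab⟩
        | refl a => exact ⟨0, rfl⟩
        | symm a b hab ih => exact hsymm a.1 b.1 ih
        | trans a b c hab hbc ih1 ih2 =>
          obtain ⟨k1, h1⟩ := ih1
          obtain ⟨k2, h2⟩ := ih2
          exact ⟨k2+k1, by rw [Function.iterate_add_apply, h1, h2]⟩
      intro q1 q2
      induction q1 using Quot.ind with | _ v => ?_
      induction q2 using Quot.ind with | _ w => ?_
      intro h
      have h' : Quot.mk r ⟨out v, hout_nfc v⟩ = Quot.mk r ⟨out w, hout_nfc w⟩ := h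
      have heqv := Quot.eqvGen_exact h'
      obtain ⟨k, hk⟩ := eqv_orbit _ _ heqv
      obtain ⟨m, hm⟩ := korbit_of_orbit v w ⟨k, hk⟩
      exact quotKIter m v w hm
    · -- surjective
      intro q
      induction q using Quot.ind with | _ a => ?_
      obtain ⟨x, hx⟩ := a
      obtain ⟨l, hne, hth, hxl⟩ := Stmt16Aux.exists_thread_through hx
      have htrv : G.IsTransition (G.s (l.head hne)) := Stmt16Aux.thread_head_trans hG hth hne
      have hheadv : l.head hne = out ⟨G.s (l.head hne), htrv⟩ :=
        hout_u ⟨G.s (l.head hne), htrv⟩ _ rfl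
      obtain ⟨i, hi, hix⟩ := List.mem_iff_getElem.1 hxl
      have hchainl : l.Chain' (fun a b => g a = b) :=
        List.IsChain.imp (fun a b hab => hlemA hab) hth.1.2.2
      have hxg : g^[i] (out ⟨G.s (l.head hne), htrv⟩) = x := by
        rw [← hheadv, Stmt16Aux.iterate_get g l hne hchainl i hi]
        exact hix
      refine ⟨Quot.mk rV ⟨G.s (l.head hne), htrv⟩, ?_⟩
      exact quotIter i _ ⟨x, hx⟩ hxg
    · -- the bijection property
      intro j a ha
      have haj : a.1 = out j := hout_u j a.1 ha
      have : a = ⟨out j, hout_nfc j⟩ := Subtype.ext haj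
      rw [this]
end
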